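/- arXiv:1203.6086 — 9 statements merged into one kernel-verified Lean document; each statement's English description precedes it below -/
import Mathlib

section
/- Let B be a countable weakly oligomorphic relational structure and let A be a countable structure over the same relational signature. Then the following are equivalent: (1) there exists a homomorphism from A to B; (2) every finite substructure of A admits a homomorphism into B (i.e. Age(A) → Age(B)); (3) CSP(A) ⊆ CSP(B), i.e. every finite structure admitting a homomorphism into A also admits a homomorphism into B. -/
open FirstOrder Language CategoryTheory

universe u v

namespace Stmt0

/-- A relation invariant under all endomorphisms of `M`. -/
def EndInvariant (L : FirstOrder.Language.{u, v}) (M : Type*) [L.Structure M] {n : ℕ}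
    (ρ : Set (Fin n → M)) : Prop :=
  ∀ f : M →[L] M, ∀ x ∈ ρ, (⇑f ∘ x) ∈ ρ

/-- A structure is weakly oligomorphic if for every arity there are only finitely many
relations invariant under its endomorphism monoid. -/
def WeaklyOligomorphic (L : FirstOrder.Language.{u, v}) (M : Type*) [L.Structure M] : Prop :=
  ∀ n : ℕ, {ρ : Set (Fin n → M) | EndInvariant L M ρ}.Finite

/-- In a relational language, any subset is a substructure. -/
def setSub (L : FirstOrder.Language.{u, v}) [L.IsRelational] (A : Type*) [L.Structure A]
    (S : Set A) : L.Substructure A :=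
  ⟨S, fun {_} f => isEmptyElim f⟩

theorem key (L : FirstOrder.Language.{u, v}) [L.IsRelational]
    (A B : Type) [L.Structure A] [L.Structure B] [Countable A]
    (hB : WeaklyOligomorphic L B)
    (hyp : ∀ C : Bundled.{0} L.Structure, Finite C → Nonempty (C ↪[L] A) → Nonempty (C →[L] B)) :
    Nonempty (A →[L] B) := by
  classical
  cases isEmpty_or_nonempty A with
  | inl hA =>
    haveI : Finite A := Finite.of_subsingleton
    exact hyp ⟨A, ‹L.Structure A›⟩ ‹Finite A› ⟨Embedding.refl L A⟩
  | inr hA =>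
  obtain ⟨a, ha⟩ := exists_surjective_nat A
  -- the finite substructures along the enumeration
  set Sub : ℕ → L.Substructure A := fun m => setSub L A (a '' Set.Iio m) with hSub
  have memSub : ∀ (m : ℕ) (i : ℕ), i < m → a i ∈ Sub m := fun m i hi => ⟨i, hi, rfl⟩
  haveI instFin : ∀ m, Finite (Sub m) := fun m => ((Set.finite_Iio m).image a).to_subtype
  have hSle : ∀ {m m' : ℕ}, m ≤ m' → Sub m ≤ Sub m' := by
    intro m m' h x hx
    exact Set.image_mono (Set.Iio_subset_Iio h) hx
  -- B is nonempty
  obtain ⟨h1⟩ := hyp ⟨Sub 1, inferInstance⟩ (instFin 1) ⟨(Sub 1).subtype⟩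
  have b0 : B := h1 ⟨a 0, memSub 1 0 Nat.one_pos⟩
  -- the invariant relations
  set Q : ∀ _ : ℕ, ℕ → Set (Fin _ → B) := fun n m =>
    {x : Fin n → B | ∃ h : Sub m →[L] B, ∀ i : Fin n, ∀ hi : a i ∈ Sub m, x i = h ⟨a i, hi⟩}
    with hQ
  have Qanti : ∀ n, Antitone (Q n) := by
    intro n m m' hmm' x hx
    obtain ⟨h, hh⟩ := hx
    refine ⟨h.comp (Substructure.inclusion (hSle hmm')).toHom, fun i hi => ?_⟩
    exact hh i (hSle hmm' hi)
  have Qinv : ∀ n m, EndInvariant L B (Q n m) := by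
    intro n m f x hx
    obtain ⟨h, hh⟩ := hx
    exact ⟨f.comp h, fun i hi => by simp [Function.comp_apply, hh i hi]⟩
  have Qne : ∀ n m, (Q n m).Nonempty := by
    intro n m
    obtain ⟨h⟩ := hyp ⟨Sub m, inferInstance⟩ (instFin m) ⟨(Sub m).subtype⟩
    refine ⟨fun i => if hi : (a i : A) ∈ Sub m then h ⟨a i, hi⟩ else b0, h, fun i hi => ?_⟩
    simp [hi]
  have stab : ∀ n, ∃ M : ℕ, ∀ m, M ≤ m → Q n m = Q n M := by
    intro n
    obtain ⟨M, -, hM⟩ := Set.Finite.exists_minimalFor' (Q n) Set.univ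
      ((hB n).subset (by rintro ρ ⟨m, -, rfl⟩; exact Qinv n m)) ⟨0, trivial⟩
    exact ⟨M, fun m hm => le_antisymm (Qanti n hm) (hM (j := m) trivial (Qanti n hm))⟩
  choose M hM using stab
  set Qi : ∀ n : ℕ, Set (Fin n → B) := fun n => Q n (M n) with hQi
  have Qi_sub : ∀ n m, Qi n ⊆ Q n m := by
    intro n m
    rcases le_or_gt (M n) m with h | h
    · exact le_of_eq (hM n m h).symm
    · exact Qanti n h.le
  have Qi_ne : ∀ n, (Qi n).Nonempty := fun n => Qne n (M n)
  have ext0 : ∀ n, ∀ x ∈ Qi n, ∃ y, y ∈ Qi (n + 1) ∧ ∀ i : Fin n, y i.castSucc = x i := by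
    intro n x hx
    obtain ⟨h, hh⟩ := Qi_sub n (max (M (n + 1)) (n + 1)) hx
    have hmem : ∀ i : Fin (n + 1), (a i : A) ∈ Sub (max (M (n + 1)) (n + 1)) :=
      fun i => memSub _ _ (lt_of_lt_of_le i.2 (le_max_right _ _))
    refine ⟨fun i => h ⟨a i, hmem i⟩, ?_, ?_⟩
    · show _ ∈ Q (n + 1) (M (n + 1))
      rw [← hM (n + 1) _ (le_max_left _ _)]
      exact ⟨h, fun i hi => rfl⟩
    · intro i
      exact (hh i (memSub _ _ (lt_of_lt_of_le (i.2.trans (Nat.lt_succ_self n))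
        (le_max_right _ _)))).symm
  have step : ∀ n (x : {x : Fin n → B // x ∈ Qi n}),
      {y : Fin (n + 1) → B // y ∈ Qi (n + 1) ∧ ∀ i : Fin n, y i.castSucc = x.1 i} :=
    fun n x => ⟨(ext0 n x.1 x.2).choose, (ext0 n x.1 x.2).choose_spec⟩
  have h0 : (fun i : Fin 0 => i.elim0 : Fin 0 → B) ∈ Qi 0 := by
    obtain ⟨x, hx⟩ := Qi_ne 0
    rwa [show (fun i : Fin 0 => i.elim0 : Fin 0 → B) = x from Subsingleton.elim _ _]
  let c : (n : ℕ) → {x : Fin n → B // x ∈ Qi n} := fun n =>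
    Nat.rec ⟨fun i => i.elim0, h0⟩ (fun n p => ⟨(step n p).1, (step n p).2.1⟩) n
  have clink : ∀ n (i : Fin n), (c (n + 1)).1 i.castSucc = (c n).1 i := fun n i =>
    (step n (c n)).2.2 i
  have compat : ∀ n m (h : n ≤ m) (i : Fin n), (c m).1 (Fin.castLE h i) = (c n).1 i := by
    intro n m h
    induction m with
    | zero =>
      intro i
      exact absurd (i.2.trans_le h) (Nat.not_lt_zero _)
    | succ m ih =>
      intro i
      rcases eq_or_lt_of_le h with rfl | h'
      · rfl
      · have h'' : n ≤ m := Nat.lt_succ_iff.1 h'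
        exact (clink m (Fin.castLE h'' i)).trans (ih h'' i)
  have consist : ∀ n (i j : Fin n), a i = a j → (c n).1 i = (c n).1 j := by
    intro n i j hij
    obtain ⟨h, hh⟩ := Qi_sub n n (c n).2
    rw [hh i (memSub n i i.2), hh j (memSub n j j.2)]
    exact congrArg h (Subtype.ext hij)
  obtain ⟨e, he⟩ : ∃ e : A → ℕ, ∀ α, a (e α) = α :=
    ⟨fun α => (ha α).choose, fun α => (ha α).choose_spec⟩
  set f : A → B := fun α => (c (e α + 1)).1 ⟨e α, Nat.lt_succ_self _⟩ with hf
  have fval : ∀ n (i : Fin n), f (a i) = (c n).1 i := by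
    intro n i
    have h1 : f (a i) = (c (max n (e (a i) + 1))).1
        ⟨e (a i), lt_of_lt_of_le (Nat.lt_succ_self _) (le_max_right _ _)⟩ :=
      (compat (e (a i) + 1) (max n (e (a i) + 1)) (le_max_right _ _)
        ⟨e (a i), Nat.lt_succ_self _⟩).symm
    have h2 : (c n).1 i = (c (max n (e (a i) + 1))).1 (Fin.castLE (le_max_left _ _) i) :=
      (compat n (max n (e (a i) + 1)) (le_max_left _ _) i).symm
    rw [h1, h2]
    exact consist _ _ _ (by simp [he, Fin.coe_castLE])
  refine ⟨⟨f, fun {k} fn => isEmptyElim fn, ?_⟩⟩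
  intro k r t hrt
  set N : ℕ := (Finset.univ.sup fun i : Fin k => e (t i)) + 1 with hN
  have htN : ∀ i : Fin k, e (t i) < N := fun i =>
    Nat.lt_succ_of_le (Finset.le_sup (f := fun i : Fin k => e (t i)) (Finset.mem_univ i))
  obtain ⟨h, hh⟩ := Qi_sub N N (c N).2
  set t' : Fin k → Sub N := fun i => ⟨t i, he (t i) ▸ memSub N (e (t i)) (htN i)⟩ with ht'
  have hrel : Structure.RelMap r t' := hrt
  have key : (f ∘ t) = (⇑h ∘ t') := by
    funext i
    have e1 : f (t i) = f (a (e (t i))) := by rw [he]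
    have e2 : f (a (e (t i))) = (c N).1 ⟨e (t i), htN i⟩ := fval N ⟨e (t i), htN i⟩
    have e3 : (c N).1 ⟨e (t i), htN i⟩ = h ⟨a (e (t i)), memSub N (e (t i)) (htN i)⟩ :=
      hh ⟨e (t i), htN i⟩ (memSub N (e (t i)) (htN i))
    rw [Function.comp_apply, e1, e2, e3, Function.comp_apply]
    exact congrArg h (Subtype.ext (he (t i)))
  rw [show (f ∘ t) = (⇑h ∘ t') from key]
  exact h.map_rel r t' hrel

/-- For a countable weakly oligomorphic structure `B` and a countable
structure `A` over the same relational signature, the existence of a homomorphism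
`A → B` is equivalent to `Age(A) → Age(B)` and to `CSP(A) ⊆ CSP(B)`. -/
theorem hom_iff_age_iff_csp (L : FirstOrder.Language.{u, v}) [L.IsRelational]
    (A B : Type) [L.Structure A] [L.Structure B] [Countable A] [Countable B]
    (hB : WeaklyOligomorphic L B) :
    (Nonempty (A →[L] B) ↔
      ∀ C : Bundled.{0} L.Structure, Finite C → Nonempty (C ↪[L] A) → Nonempty (C →[L] B)) ∧
    (Nonempty (A →[L] B) ↔
      ∀ C : Bundled.{0} L.Structure, Finite C → Nonempty (C →[L] A) → Nonempty (C →[L] B)) := by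
  constructor
  · constructor
    · rintro ⟨f⟩ C _ ⟨em⟩
      exact ⟨f.comp em.toHom⟩
    · exact key L A B hB
  · constructor
    · rintro ⟨f⟩ C _ ⟨g⟩
      exact ⟨f.comp g⟩
    · intro H
      refine key L A B hB (fun C hC hE => ?_)
      obtain ⟨em⟩ := hE
      exact H C hC ⟨em.toHom⟩

end Stmt0
end

section
/- Let M be a countable weakly oligomorphic relational structure, and let N₁ and N₂ be countable structures over the same signature, each elementarily equivalent to M (i.e. each a model of the complete first-order theory of M). Then N₁ and N₂ are homomorphism-equivalent: there exist homomorphisms N₁ → N₂ and N₂ → N₁. -/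
open FirstOrder Language CategoryTheory

universe u v

namespace Stmt1

/-- A relation invariant under all endomorphisms of `M`. -/
def EndInvariant (L : FirstOrder.Language.{u, v}) (M : Type*) [L.Structure M] {n : ℕ}
    (ρ : Set (Fin n → M)) : Prop :=
  ∀ f : M →[L] M, ∀ x ∈ ρ, (⇑f ∘ x) ∈ ρ

/-- A structure is weakly oligomorphic if for every arity there are only finitely many
relations invariant under its endomorphism monoid. -/
def WeaklyOligomorphic (L : FirstOrder.Language.{u, v}) (M : Type*) [L.Structure M] : Prop :=
  ∀ n : ℕ, {ρ : Set (Fin n → M) | EndInvariant L M ρ}.Finite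

variable {L : FirstOrder.Language.{u, v}}

/-- Positive existential formulas. -/
inductive IsPE : ∀ {n : ℕ}, L.BoundedFormula Empty n → Prop
  | equal {n} (t₁ t₂ : L.Term (Empty ⊕ Fin n)) : IsPE (BoundedFormula.equal t₁ t₂)
  | rel {n k : ℕ} (R : L.Relations k) (ts : Fin k → L.Term (Empty ⊕ Fin n)) :
      IsPE (BoundedFormula.rel R ts)
  | top {n} : IsPE (⊤ : L.BoundedFormula Empty n)
  | inf {n} {φ ψ : L.BoundedFormula Empty n} : IsPE φ → IsPE ψ → IsPE (φ ⊓ ψ)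
  | ex {n} {φ : L.BoundedFormula Empty (n + 1)} : IsPE φ → IsPE φ.ex

theorem realize_rel' {C : Type*} [L.Structure C] {n k : ℕ} (R : L.Relations k)
    (ts : Fin k → L.Term (Empty ⊕ Fin n)) (v : Empty → C) (xs : Fin n → C) :
    (BoundedFormula.rel R ts).Realize v xs ↔
      Structure.RelMap R fun i => (ts i).realize (Sum.elim v xs) :=
  Iff.rfl

theorem comp_sum_elim {A B : Type*} {n : ℕ} (f : A → B) (x : Fin n → A) :
    (f ∘ Sum.elim (default : Empty → A) x : Empty ⊕ Fin n → B)
      = Sum.elim (default : Empty → B) (f ∘ x) := by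
  funext s
  cases s with
  | inl e => exact e.elim
  | inr i => rfl

theorem IsPE.realize_hom {A B : Type*} [L.Structure A] [L.Structure B] (f : A →[L] B)
    {n : ℕ} {φ : L.BoundedFormula Empty n} (h : IsPE φ) :
    ∀ x : Fin n → A, φ.Realize default x → φ.Realize default (⇑f ∘ x) := by
  induction h with
  | equal t₁ t₂ =>
    intro x hx
    have hx' : t₁.realize (Sum.elim (default : Empty → A) x)
        = t₂.realize (Sum.elim (default : Empty → A) x) := hx
    show t₁.realize (Sum.elim (default : Empty → B) (⇑f ∘ x))
        = t₂.realize (Sum.elim (default : Empty → B) (⇑f ∘ x))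
    rw [← comp_sum_elim, HomClass.realize_term, HomClass.realize_term, hx']
  | rel R ts =>
    intro x hx
    rw [realize_rel'] at hx ⊢
    have heq : (fun i => Term.realize (Sum.elim (default : Empty → B) (⇑f ∘ x)) (ts i))
        = ⇑f ∘ fun i => Term.realize (Sum.elim (default : Empty → A) x) (ts i) := by
      funext i
      rw [← comp_sum_elim, HomClass.realize_term]
      rfl
    rw [heq]
    exact f.map_rel R _ hx
  | top =>
    intro x _
    exact BoundedFormula.realize_top.2 trivial
  | inf h1 h2 ih1 ih2 =>
    intro x hx
    rw [BoundedFormula.realize_inf] at hx ⊢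
    exact ⟨ih1 x hx.1, ih2 x hx.2⟩
  | ex h ih =>
    intro x hx
    rw [BoundedFormula.realize_ex] at hx ⊢
    obtain ⟨a, ha⟩ := hx
    exact ⟨f a, by rw [← Fin.comp_snoc]; exact ih _ ha⟩

theorem IsPE.endInvariant {M : Type*} [L.Structure M] {n : ℕ}
    {φ : L.BoundedFormula Empty n} (h : IsPE φ) :
    EndInvariant L M {x : Fin n → M | φ.Realize default x} :=
  fun f x hx => h.realize_hom f x hx

theorem alls_iff {C : Type*} [L.Structure C] {n : ℕ} (φ ψ : L.BoundedFormula Empty n) :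
    (C ⊨ ((φ.iff ψ).alls)) ↔ ∀ x : Fin n → C, (φ.Realize default x ↔ ψ.Realize default x) := by
  have h : (C ⊨ ((φ.iff ψ).alls)) ↔ ∀ xs : Fin n → C, (φ.iff ψ).Realize default xs :=
    BoundedFormula.realize_alls
  rw [h]
  simp [BoundedFormula.realize_iff]

theorem transfer {A B : Type*} [L.Structure A] [L.Structure B] (h : A ≅[L] B) {n : ℕ}
    {φ ψ : L.BoundedFormula Empty n}
    (hs : ∀ x : Fin n → A, φ.Realize default x ↔ ψ.Realize default x) (y : Fin n → B) :
    φ.Realize default y ↔ ψ.Realize default y :=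
  (alls_iff φ ψ).1 ((h.realize_sentence _).1 ((alls_iff φ ψ).2 hs)) y

theorem sentence_rel_iff {C : Type*} [L.Structure C] (r : L.Relations 0) :
    (C ⊨ (BoundedFormula.rel r (fun i => Term.var (Sum.inr i)) : L.Sentence)) ↔
      ∀ x : Fin 0 → C, Structure.RelMap r x := by
  constructor
  · intro h x
    rw [Subsingleton.elim x (fun i : Fin 0 => Term.realize
      (Sum.elim (default : Empty → C) (default : Fin 0 → C))
      (Term.var (Sum.inr i) : L.Term (Empty ⊕ Fin 0)))]
    exact h
  · intro h
    exact h _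

theorem isPE_foldr {n : ℕ} :
    ∀ l : List (L.BoundedFormula Empty n), (∀ φ ∈ l, IsPE φ) →
      IsPE (l.foldr (· ⊓ ·) ⊤)
  | [], _ => .top
  | φ :: l, h => .inf (h φ (by simp)) (isPE_foldr l fun ψ hψ => h ψ (by simp [hψ]))

theorem realize_foldr {C : Type*} [L.Structure C] {n : ℕ}
    (l : List (L.BoundedFormula Empty n)) (x : Fin n → C) :
    (l.foldr (· ⊓ ·) ⊤).Realize default x ↔ ∀ φ ∈ l, φ.Realize default x := by
  induction l with
  | nil => simp
  | cons φ l ih => simp [BoundedFormula.realize_inf, ih]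

/-- The key extension lemma. -/
theorem extend {M N₁ N₂ : Type*} [L.Structure M] [L.Structure N₁] [L.Structure N₂]
    (hM : WeaklyOligomorphic L M) (h₂ : M ≅[L] N₂) {n : ℕ}
    (a : Fin (n + 1) → N₁) (b : Fin n → N₂)
    (hb : ∀ φ : L.BoundedFormula Empty n, IsPE φ →
      φ.Realize default (Fin.init a) → φ.Realize default b) :
    ∃ c : N₂, ∀ φ : L.BoundedFormula Empty (n + 1), IsPE φ →
      φ.Realize default a → φ.Realize default (Fin.snoc b c) := by
  classical
  set T : Set (Set (Fin (n + 1) → M)) :=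
    {ρ | EndInvariant L M ρ ∧ ∃ φ : L.BoundedFormula Empty (n + 1),
      IsPE φ ∧ {x | φ.Realize default x} = ρ ∧ φ.Realize default a} with hTdef
  have hT : T.Finite := (hM (n + 1)).subset fun ρ hρ => hρ.1
  choose G hG1 hG2 hG3 using fun ρ (hρ : ρ ∈ T) => hρ.2
  set l : List (L.BoundedFormula Empty (n + 1)) :=
    hT.toFinset.attach.toList.map (fun ρ => G ρ.1 (hT.mem_toFinset.1 ρ.2)) with hldef
  set Φ : L.BoundedFormula Empty (n + 1) := l.foldr (· ⊓ ·) ⊤ with hΦdef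
  have hlmem : ∀ ψ ∈ l, ∃ ρ, ∃ hρ : ρ ∈ T, ψ = G ρ hρ := by
    intro ψ hψ
    rw [hldef, List.mem_map] at hψ
    obtain ⟨⟨ρ, hρ⟩, _, rfl⟩ := hψ
    exact ⟨ρ, hT.mem_toFinset.1 hρ, rfl⟩
  have hΦpe : IsPE Φ := isPE_foldr l (by
    intro ψ hψ
    obtain ⟨ρ, hρ, rfl⟩ := hlmem ψ hψ
    exact hG1 ρ hρ)
  have hΦa : Φ.Realize default a := (realize_foldr l a).2 (by
    intro ψ hψ
    obtain ⟨ρ, hρ, rfl⟩ := hlmem ψ hψ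
    exact hG3 ρ hρ)
  have hexa : (Φ.ex).Realize default (Fin.init a) :=
    BoundedFormula.realize_ex.2 ⟨a (Fin.last n), by rwa [Fin.snoc_init_self]⟩
  have hexb : (Φ.ex).Realize default b := hb _ hΦpe.ex hexa
  obtain ⟨c, hc⟩ := BoundedFormula.realize_ex.1 hexb
  refine ⟨c, fun ψ hψ hψa => ?_⟩
  have hmem : {x : Fin (n + 1) → M | ψ.Realize default x} ∈ T :=
    ⟨hψ.endInvariant, ψ, hψ, rfl, hψa⟩
  have hGl : G _ hmem ∈ l := by
    rw [hldef, List.mem_map]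
    exact ⟨⟨_, hT.mem_toFinset.2 hmem⟩, Finset.mem_toList.2 (Finset.mem_attach _ _), rfl⟩
  have hGψ : (G _ hmem).Realize default (Fin.snoc b c) :=
    (realize_foldr l (Fin.snoc b c)).1 hc _ hGl
  have hsem : ∀ x : Fin (n + 1) → M,
      (G _ hmem).Realize default x ↔ ψ.Realize default x := by
    intro x
    have := hG2 _ hmem
    rw [Set.ext_iff] at this
    exact this x
  exact (transfer h₂ hsem (Fin.snoc b c)).1 hGψ

/-- The approximating sequence. -/
noncomputable def seq {M N₁ N₂ : Type*} [L.Structure M] [L.Structure N₁] [L.Structure N₂]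
    (hM : WeaklyOligomorphic L M) (h₁ : M ≅[L] N₁) (h₂ : M ≅[L] N₂) (u : ℕ → N₁) :
    (n : ℕ) → {b : Fin n → N₂ // ∀ φ : L.BoundedFormula Empty n, IsPE φ →
      φ.Realize default (fun i => u i.val) → φ.Realize default b}
  | 0 => ⟨default, fun φ _ hφ => by
      have h1 : N₁ ⊨ (φ : L.Sentence) := by
        show φ.Realize (default : Empty → N₁) (default : Fin 0 → N₁)
        rwa [Subsingleton.elim (default : Fin 0 → N₁) (fun i : Fin 0 => u i.val)]
      have h2 : N₂ ⊨ (φ : L.Sentence) := ((h₁.symm.trans h₂).realize_sentence φ).1 h1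
      exact h2⟩
  | (n + 1) => by
      have p := seq hM h₁ h₂ u n
      have hinit : (fun i : Fin n => u i.val) = Fin.init (fun i : Fin (n + 1) => u i.val) := by
        funext i
        simp [Fin.init]
      have hext := extend hM h₂ (fun i : Fin (n + 1) => u i.val) p.1
        (fun φ hpe h => p.2 φ hpe (by rwa [hinit]))
      exact ⟨Fin.snoc p.1 (Classical.choose hext), Classical.choose_spec hext⟩

theorem seq_castSucc {M N₁ N₂ : Type*} [L.Structure M] [L.Structure N₁] [L.Structure N₂]
    (hM : WeaklyOligomorphic L M) (h₁ : M ≅[L] N₁) (h₂ : M ≅[L] N₂) (u : ℕ → N₁)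
    (n : ℕ) (i : Fin n) :
    (seq hM h₁ h₂ u (n + 1)).1 i.castSucc = (seq hM h₁ h₂ u n).1 i := by
  simp only [seq]
  rw [Fin.snoc_castSucc]

theorem seq_stable {M N₁ N₂ : Type*} [L.Structure M] [L.Structure N₁] [L.Structure N₂]
    (hM : WeaklyOligomorphic L M) (h₁ : M ≅[L] N₁) (h₂ : M ≅[L] N₂) (u : ℕ → N₁) :
    ∀ (m n : ℕ) (h : n ≤ m) (i : Fin n),
      (seq hM h₁ h₂ u m).1 (Fin.castLE h i) = (seq hM h₁ h₂ u n).1 i := by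
  intro m
  induction m with
  | zero =>
    intro n h i
    exact absurd i.isLt (by omega)
  | succ m ih =>
    intro n h i
    rcases Nat.eq_or_lt_of_le h with rfl | h'
    · exact congrArg _ (Fin.ext rfl)
    · have hn : n ≤ m := Nat.lt_succ_iff.1 h'
      have : Fin.castLE h i = (Fin.castLE hn i).castSucc := Fin.ext rfl
      rw [this, seq_castSucc, ih n hn i]

theorem homEx {M N₁ N₂ : Type*} [L.Structure M] [L.Structure N₁] [L.Structure N₂]
    [Countable N₁] [L.IsRelational]
    (hM : WeaklyOligomorphic L M) (h₁ : M ≅[L] N₁) (h₂ : M ≅[L] N₂) :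
    Nonempty (N₁ →[L] N₂) := by
  classical
  by_cases hne : Nonempty N₁
  · obtain ⟨u, hu⟩ := exists_surjective_nat N₁
    set B : ℕ → N₂ := fun n => (seq hM h₁ h₂ u (n + 1)).1 (Fin.last n) with hBdef
    have hBseq : ∀ n : ℕ, (fun i : Fin n => B i.val) = (seq hM h₁ h₂ u n).1 := by
      intro n
      funext i
      have hle : i.val + 1 ≤ n := i.isLt
      have := seq_stable hM h₁ h₂ u n (i.val + 1) hle (Fin.last i.val)
      have hcast : Fin.castLE hle (Fin.last i.val) = i := Fin.ext rfl
      rw [hcast] at this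
      exact this.symm
    have hGood : ∀ (n : ℕ) (φ : L.BoundedFormula Empty n), IsPE φ →
        φ.Realize default (fun i : Fin n => u i.val) →
        φ.Realize default (fun i : Fin n => B i.val) := by
      intro n φ hpe h
      rw [hBseq n]
      exact (seq hM h₁ h₂ u n).2 φ hpe h
    set F : N₁ → N₂ := fun a => B (Classical.choose (hu a)) with hFdef
    refine ⟨{ toFun := F,
              map_fun' := fun {k} f _ => isEmptyElim f,
              map_rel' := ?_ }⟩
    intro k r x hx
    set pk : Fin k → ℕ := fun i => Classical.choose (hu (x i)) with hpkdef
    have hpk : ∀ i, u (pk i) = x i := fun i => Classical.choose_spec (hu (x i))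
    set m : ℕ := (Finset.univ.sup pk) + 1 with hmdef
    have hlt : ∀ i, pk i < m := fun i =>
      Nat.lt_succ_of_le (Finset.le_sup (Finset.mem_univ i))
    set φ : L.BoundedFormula Empty m :=
      BoundedFormula.rel r (fun i => Term.var (Sum.inr (⟨pk i, hlt i⟩ : Fin m))) with hφdef
    have hpe : IsPE φ := IsPE.rel r _
    have h1 : φ.Realize default (fun i : Fin m => u i.val) := by
      show Structure.RelMap r fun i => u (pk i)
      have hxe : (fun i => u (pk i)) = x := funext hpk
      rw [hxe]
      exact hx
    have h2 := hGood m φ hpe h1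
    exact h2
  · rw [not_nonempty_iff] at hne
    refine ⟨{ toFun := fun a => (hne.false a).elim,
              map_fun' := fun {k} f _ => isEmptyElim f,
              map_rel' := ?_ }⟩
    intro k r x hx
    match k, r, x, hx with
    | 0, r, x, hx =>
      have hS : N₁ ⊨ (BoundedFormula.rel r (fun i => Term.var (Sum.inr i)) : L.Sentence) :=
        (sentence_rel_iff r).2 (fun y => by rwa [Subsingleton.elim y x])
      have hS2 : N₂ ⊨ (BoundedFormula.rel r (fun i => Term.var (Sum.inr i)) : L.Sentence) :=
        ((h₁.symm.trans h₂).realize_sentence _).1 hS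
      exact (sentence_rel_iff r).1 hS2 _
    | (k + 1), r, x, hx => exact (hne.false (x 0)).elim

/-- Any two countable models of the complete first-order theory of a
countable weakly oligomorphic structure are homomorphism-equivalent. -/
theorem models_homEquiv (L : FirstOrder.Language.{u, v}) [L.IsRelational]
    (M N₁ N₂ : Type) [L.Structure M] [L.Structure N₁] [L.Structure N₂]
    [Countable M] [Countable N₁] [Countable N₂]
    (hM : WeaklyOligomorphic L M)
    (h₁ : M ≅[L] N₁) (h₂ : M ≅[L] N₂) :
    Nonempty (N₁ →[L] N₂) ∧ Nonempty (N₂ →[L] N₁) := by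
  exact ⟨homEx hM h₁ h₂, homEx hM h₂ h₁⟩

end Stmt1
end

section
/- Let 𝒰 be a strict Fraïssé class of finite structures over a relational signature, let 𝒞 be a Fraïssé class that is free in 𝒰, and let T be a countable structure with Age(T) ⊆ 𝒰. Then the class 𝒞̄ ∩ CSP(T)-bar (all countable structures A with Age(A) ⊆ 𝒞 admitting a homomorphism into T) contains a universal element: a countable structure U with Age(U) ⊆ 𝒞 and a homomorphism U → T such that every countable structure A with Age(A) ⊆ 𝒞 and A → T embeds into U. Moreover, if Age(T) ⊆ 𝒞, then U can be chosen so that T is a retract of U, i.e. there are homomorphisms s : T → U and r : U → T with r ∘ s = id_T. -/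
open FirstOrder Language CategoryTheory

universe u v

namespace Stmt3

variable {L : FirstOrder.Language.{u, v}}

/-- The age of `M` is contained in the class `C` of finite structures. -/
def AgeIn (C : Set (Bundled.{0} L.Structure)) (M : Type*) [L.Structure M] : Prop :=
  ∀ A : Bundled.{0} L.Structure, Finite A → Nonempty (A ↪[L] M) → A ∈ C

/-- `A` is a countable structure whose age is contained in `C`, i.e. `A ∈ C̄`. -/
def InBar (C : Set (Bundled.{0} L.Structure)) (A : Bundled.{0} L.Structure) : Prop :=
  Countable A ∧ AgeIn C A

/-- A Fraïssé class of finite structures: nonempty, isomorphism-closed, countably many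
isomorphism types, hereditary, with the joint embedding and amalgamation properties. -/
structure IsFraisseClass (C : Set (Bundled.{0} L.Structure)) : Prop where
  nonempty : C.Nonempty
  finite : ∀ A ∈ C, Finite A
  isoInvariant : ∀ A B : Bundled.{0} L.Structure, Nonempty (A ≃[L] B) → (A ∈ C ↔ B ∈ C)
  countableTypes : ∃ S : Set (Bundled.{0} L.Structure), S.Countable ∧
    ∀ A ∈ C, ∃ B ∈ S, Nonempty (A ≃[L] B)
  hereditary : ∀ A ∈ C, ∀ B : Bundled.{0} L.Structure, Finite B → Nonempty (B ↪[L] A) → B ∈ C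
  jep : ∀ A ∈ C, ∀ B ∈ C, ∃ D ∈ C, Nonempty (A ↪[L] D) ∧ Nonempty (B ↪[L] D)
  amalgamation : ∀ A B₁ B₂ : Bundled.{0} L.Structure, A ∈ C → B₁ ∈ C → B₂ ∈ C →
    ∀ (f₁ : A ↪[L] B₁) (f₂ : A ↪[L] B₂),
      ∃ (D : Bundled.{0} L.Structure) (_ : D ∈ C) (g₁ : B₁ ↪[L] D) (g₂ : B₂ ↪[L] D),
        ∀ x, g₁ (f₁ x) = g₂ (f₂ x)

/-- `(P, g₁, g₂)` is a pushout of the pair of embeddings `(f₁, f₂)` in the category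
`(K̄, →)` of countable structures with age contained in `K`, with homomorphisms. -/
def IsPushoutIn (K : Set (Bundled.{0} L.Structure)) {A B₁ B₂ : Bundled.{0} L.Structure}
    (f₁ : A ↪[L] B₁) (f₂ : A ↪[L] B₂) (P : Bundled.{0} L.Structure)
    (g₁ : B₁ →[L] P) (g₂ : B₂ →[L] P) : Prop :=
  InBar K P ∧ (∀ x, g₁ (f₁ x) = g₂ (f₂ x)) ∧
  ∀ D : Bundled.{0} L.Structure, InBar K D →
    ∀ (h₁ : B₁ →[L] D) (h₂ : B₂ →[L] D), (∀ x, h₁ (f₁ x) = h₂ (f₂ x)) →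
      ∃! h : P →[L] D, h.comp g₁ = h₁ ∧ h.comp g₂ = h₂

/-- `(P, g₁, g₂)` is a coproduct of `B₁, B₂` in the category `(K̄, →)`. -/
def IsCoproductIn (K : Set (Bundled.{0} L.Structure)) (B₁ B₂ P : Bundled.{0} L.Structure)
    (g₁ : B₁ →[L] P) (g₂ : B₂ →[L] P) : Prop :=
  InBar K P ∧
  ∀ D : Bundled.{0} L.Structure, InBar K D → ∀ (h₁ : B₁ →[L] D) (h₂ : B₂ →[L] D),
    ∃! h : P →[L] D, h.comp g₁ = h₁ ∧ h.comp g₂ = h₂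

/-- A strict Fraïssé class: a Fraïssé class in which every pair of embeddings with common
domain has a pushout in `(K̄,→)`, and every pair of members has a coproduct in `(K̄,→)`. -/
def IsStrictFraisse (K : Set (Bundled.{0} L.Structure)) : Prop :=
  IsFraisseClass K ∧
  (∀ A B₁ B₂ : Bundled.{0} L.Structure, A ∈ K → B₁ ∈ K → B₂ ∈ K →
    ∀ (f₁ : A ↪[L] B₁) (f₂ : A ↪[L] B₂),
      ∃ (P : Bundled.{0} L.Structure) (g₁ : B₁ →[L] P) (g₂ : B₂ →[L] P),
        IsPushoutIn K f₁ f₂ P g₁ g₂) ∧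
  (∀ B₁ B₂ : Bundled.{0} L.Structure, B₁ ∈ K → B₂ ∈ K →
    ∃ (P : Bundled.{0} L.Structure) (g₁ : B₁ →[L] P) (g₂ : B₂ →[L] P),
      IsCoproductIn K B₁ B₂ P g₁ g₂)

/-- `C` is free in the strict Fraïssé class `K`: `C ⊆ K` and `C` is closed under the
canonical (pushout) amalgams and under finite coproducts taken in `(K̄,→)`. -/
def IsFreeIn (C K : Set (Bundled.{0} L.Structure)) : Prop :=
  C ⊆ K ∧
  (∀ A B₁ B₂ : Bundled.{0} L.Structure, A ∈ C → B₁ ∈ C → B₂ ∈ C →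
    ∀ (f₁ : A ↪[L] B₁) (f₂ : A ↪[L] B₂) (P : Bundled.{0} L.Structure)
      (g₁ : B₁ →[L] P) (g₂ : B₂ →[L] P), IsPushoutIn K f₁ f₂ P g₁ g₂ → P ∈ C) ∧
  (∀ B₁ B₂ : Bundled.{0} L.Structure, B₁ ∈ C → B₂ ∈ C →
    ∀ (P : Bundled.{0} L.Structure) (g₁ : B₁ →[L] P) (g₂ : B₂ →[L] P),
      IsCoproductIn K B₁ B₂ P g₁ g₂ → P ∈ C)

open FirstOrder.Language.Structure Set

set_option linter.unusedSectionVars false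
set_option maxHeartbeats 1000000

section Helpers
variable [L.IsRelational]

/-- In a relational language, any subset of a structure is (the carrier of) a substructure. -/
def setSub {M : Type*} [L.Structure M] (s : Set M) : L.Substructure M :=
  ⟨s, fun f => isEmptyElim f⟩

@[simp] lemma mem_setSub {M : Type*} [L.Structure M] {s : Set M} {x : M} :
    x ∈ setSub (L := L) s ↔ x ∈ s := Iff.rfl

/-- Build an embedding from a homomorphism `g` which is "detected" by an embedding. -/
def homToEmbedding {A B D : Type*} [L.Structure A] [L.Structure B] [L.Structure D]
    (g : A →[L] B) (e : A ↪[L] D) (k : B →[L] D) (hk : ∀ x, k (g x) = e x) : A ↪[L] B where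
  toFun := g
  inj' x y hxy := e.injective (by rw [← hk, ← hk, hxy])
  map_fun' f := isEmptyElim f
  map_rel' r x := by
    constructor
    · intro h
      have h2 := k.map_rel r _ h
      have e2 : (⇑k ∘ (⇑g ∘ x)) = ⇑e ∘ x := funext fun i => hk (x i)
      rw [e2] at h2
      exact (e.map_rel r x).1 h2
    · exact g.map_rel r x

@[simp] lemma homToEmbedding_apply {A B D : Type*} [L.Structure A] [L.Structure B]
    [L.Structure D] (g : A →[L] B) (e : A ↪[L] D) (k : B →[L] D) (hk : ∀ x, k (g x) = e x)
    (a : A) : homToEmbedding g e k hk a = g a := rfl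

/-- Nullary relations agree across any two members of a class with the joint embedding
property. -/
lemma nullary_coherence {U : Set (Bundled.{0} L.Structure)} (hU : IsFraisseClass U)
    {A B : Bundled.{0} L.Structure} (hA : A ∈ U) (hB : B ∈ U) (r : L.Relations 0)
    (x : Fin 0 → A) (y : Fin 0 → B) : RelMap r x ↔ RelMap r y := by
  obtain ⟨D, _, ⟨e₁⟩, ⟨e₂⟩⟩ := hU.jep A hA B hB
  have h1 := (e₁.map_rel r x).symm
  have h2 := e₂.map_rel r y
  have e3 : (⇑e₁ ∘ x) = (⇑e₂ ∘ y) := funext fun i => i.elim0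
  rw [e3] at h1
  exact h1.trans h2

/-- The empty substructure of `N`, as a bundled structure. -/
noncomputable def emptyBundled (N : Type) [L.Structure N] : Bundled.{0} L.Structure :=
  ⟨↥(setSub (L := L) (∅ : Set N)), inferInstance⟩

instance emptyBundled_isEmpty (N : Type) [L.Structure N] : IsEmpty (emptyBundled (L := L) N) :=
  ⟨fun x => Set.notMem_empty x.1 x.2⟩

lemma emptyBundled_mem {U : Set (Bundled.{0} L.Structure)} {N : Type} [L.Structure N]
    (hN : AgeIn U N) : emptyBundled (L := L) N ∈ U :=
  hN _ inferInstance ⟨Substructure.subtype _⟩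

/-- Any member of `U` with empty carrier embeds into any structure whose age lies in `U`. -/
noncomputable def emptyEmb {U : Set (Bundled.{0} L.Structure)} (hU : IsFraisseClass U)
    {A : Bundled.{0} L.Structure} [IsEmpty A] (hA : A ∈ U)
    (N : Type) [L.Structure N] (hN : AgeIn U N) : A ↪[L] N where
  toFun := isEmptyElim
  inj' x := isEmptyElim x
  map_fun' f := isEmptyElim f
  map_rel' {n} r x := by
    match n with
    | 0 =>
      have h := nullary_coherence hU hA (emptyBundled_mem (L := L) hN) r x
        (fun i => i.elim0)
      have h2 := (Substructure.subtype (setSub (L := L) (∅ : Set N))).map_rel r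
        (fun i => i.elim0)
      have e1 : ((isEmptyElim : A → N) ∘ x)
          = ((Substructure.subtype (setSub (L := L) (∅ : Set N))) ∘ (fun i => i.elim0)) :=
        funext fun i => i.elim0
      rw [e1]
      exact h2.trans h.symm
    | (m+1) => exact isEmptyElim (x 0)

variable {U C : Set (Bundled.{0} L.Structure)} {T : Type} [L.Structure T] [Countable T]

/-- Colored amalgamation via pushouts. -/
lemma camalg (hU : IsStrictFraisse U) (hfree : IsFreeIn C U) (hT : AgeIn U T)
    {A B₁ B₂ : Bundled.{0} L.Structure} (hA : A ∈ C) (h1 : B₁ ∈ C) (h2 : B₂ ∈ C)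
    (f₁ : A ↪[L] B₁) (f₂ : A ↪[L] B₂) (c₁ : B₁ →[L] T) (c₂ : B₂ →[L] T)
    (hc : ∀ x, c₁ (f₁ x) = c₂ (f₂ x)) :
    ∃ (D : Bundled.{0} L.Structure) (_ : D ∈ C) (g₁ : B₁ ↪[L] D) (g₂ : B₂ ↪[L] D)
      (d : D →[L] T), (∀ x, g₁ (f₁ x) = g₂ (f₂ x)) ∧ (∀ x, d (g₁ x) = c₁ x) ∧
      (∀ x, d (g₂ x) = c₂ x) := by
  obtain ⟨P, g₁, g₂, hP⟩ :=
    hU.2.1 A B₁ B₂ (hfree.1 hA) (hfree.1 h1) (hfree.1 h2) f₁ f₂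
  have hPC : P ∈ C := hfree.2.1 A B₁ B₂ hA h1 h2 f₁ f₂ P g₁ g₂ hP
  obtain ⟨hPbar, hcomm, hump⟩ := hP
  have hTbar : InBar U (Bundled.of T) := ⟨‹Countable T›, hT⟩
  obtain ⟨d, ⟨hd₁, hd₂⟩, -⟩ := hump (Bundled.of T) hTbar c₁ c₂ hc
  obtain ⟨D', hD', e₁, e₂, hcomm'⟩ :=
    hU.1.amalgamation A B₁ B₂ (hfree.1 hA) (hfree.1 h1) (hfree.1 h2) f₁ f₂
  have hD'bar : InBar U D' := by
    refine ⟨?_, fun B fB em => hU.1.hereditary D' hD' B fB em⟩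
    haveI := hU.1.finite D' hD'
    exact Finite.to_countable
  obtain ⟨k, ⟨hk₁, hk₂⟩, -⟩ := hump D' hD'bar e₁.toHom e₂.toHom (fun x => hcomm' x)
  exact ⟨P, hPC,
    homToEmbedding g₁ e₁ k (fun x => by simpa using DFunLike.congr_fun hk₁ x),
    homToEmbedding g₂ e₂ k (fun x => by simpa using DFunLike.congr_fun hk₂ x),
    d, hcomm,
    fun x => by exact DFunLike.congr_fun hd₁ x,
    fun x => by exact DFunLike.congr_fun hd₂ x⟩

end Helpers

section Arrows
variable [L.IsRelational]
variable (C : Set (Bundled.{0} L.Structure)) (T : Type) [L.Structure T]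

/-- An "arrow": an embedding between two members of `C` with a coloring of the codomain. -/
structure Arr where
  A : Bundled.{0} L.Structure
  B : Bundled.{0} L.Structure
  hA : A ∈ C
  hB : B ∈ C
  f : A ↪[L] B
  c : B →[L] T

variable {C T}

/-- `t` covers the task `(A,B,f,c)` up to isomorphism. -/
def ArrCovers (t : Arr C T) (A B : Bundled.{0} L.Structure) (f : A ↪[L] B)
    (c : B →[L] T) : Prop :=
  ∃ (α : A ≃[L] t.A) (β : B ≃[L] t.B), (∀ a, β (f a) = t.f (α a)) ∧ (∀ b, t.c (β b) = c b)

lemma exists_arr_enum [Countable T] (hC : IsFraisseClass C) (t₀ : Arr C T) :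
    ∃ ar : ℕ → Arr C T, ∀ (A B : Bundled.{0} L.Structure) (_ : A ∈ C) (_ : B ∈ C)
      (f : A ↪[L] B) (c : B →[L] T), ∃ n, ArrCovers (ar n) A B f c := by
  classical
  obtain ⟨S, hScount, hSrep⟩ := hC.countableTypes
  set S' : Set (Bundled.{0} L.Structure) := S ∩ C with hS'
  have hS'count : S'.Countable := hScount.mono Set.inter_subset_left
  have hrep : ∀ A ∈ C, ∃ B ∈ S', Nonempty (A ≃[L] B) := by
    intro A hA
    obtain ⟨B, hB, hiso⟩ := hSrep A hA
    exact ⟨B, ⟨hB, (hC.isoInvariant A B hiso).1 hA⟩, hiso⟩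
  let Idx := Σ p : ↥S' × ↥S',
    ((p.1.1 : Bundled.{0} L.Structure) ↪[L] (p.2.1 : Bundled.{0} L.Structure)) ×
    ((p.2.1 : Bundled.{0} L.Structure) →[L] T)
  haveI : Countable ↥S' := hS'count.to_subtype
  haveI hfib : ∀ p : ↥S' × ↥S',
      Countable (((p.1.1 : Bundled.{0} L.Structure) ↪[L] (p.2.1 : Bundled.{0} L.Structure)) ×
        ((p.2.1 : Bundled.{0} L.Structure) →[L] T)) := by
    intro p
    haveI : Finite (p.1.1 : Bundled.{0} L.Structure) := hC.finite _ p.1.2.2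
    haveI : Finite (p.2.1 : Bundled.{0} L.Structure) := hC.finite _ p.2.2.2
    haveI : Countable ((p.1.1 : Bundled.{0} L.Structure) ↪[L] (p.2.1 : Bundled.{0} L.Structure)) :=
      (DFunLike.coe_injective).countable
    haveI : Countable ((p.2.1 : Bundled.{0} L.Structure) →[L] T) :=
      (DFunLike.coe_injective).countable
    infer_instance
  haveI : Countable Idx := by infer_instance
  have transport : ∀ (A B : Bundled.{0} L.Structure) (_ : A ∈ C) (_ : B ∈ C)
      (f : A ↪[L] B) (c : B →[L] T), ∃ (i : Idx) (α : A ≃[L] (i.1.1.1 : Bundled.{0} L.Structure))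
        (β : B ≃[L] (i.1.2.1 : Bundled.{0} L.Structure)),
        (∀ a, β (f a) = i.2.1 (α a)) ∧ (∀ b, i.2.2 (β b) = c b) := by
    intro A B hA hB f c
    obtain ⟨A', hA', ⟨α⟩⟩ := hrep A hA
    obtain ⟨B', hB', ⟨β⟩⟩ := hrep B hB
    refine ⟨⟨(⟨A', hA'⟩, ⟨B', hB'⟩),
      ((β.toEmbedding.comp f).comp α.symm.toEmbedding,
        c.comp β.symm.toEmbedding.toHom)⟩, α, β, fun a => ?_, fun b => ?_⟩
    · simp
    · simp
  haveI : Nonempty Idx := by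
    obtain ⟨i, -⟩ := transport t₀.A t₀.B t₀.hA t₀.hB t₀.f t₀.c
    exact ⟨i⟩
  obtain ⟨e, he⟩ := exists_surjective_nat Idx
  refine ⟨fun n => ⟨(e n).1.1.1, (e n).1.2.1, (e n).1.1.2.2, (e n).1.2.2.2,
    (e n).2.1, (e n).2.2⟩, ?_⟩
  intro A B hA hB f c
  obtain ⟨i, α, β, h1, h2⟩ := transport A B hA hB f c
  obtain ⟨n, hn⟩ := he i
  subst hn
  exact ⟨n, α, β, h1, h2⟩

end Arrows
section Chain
variable [L.IsRelational]
variable {U C : Set (Bundled.{0} L.Structure)} {T : Type} [L.Structure T] [Countable T]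

/-- A colored structure from the class. -/
structure CCS (C' : Set (Bundled.{0} L.Structure)) (T' : Type) [L.Structure T'] where
  A : Bundled.{0} L.Structure
  c : A →[L] T'
  mem : A ∈ C'

lemma step_list (hU : IsStrictFraisse U) (hC : IsFraisseClass C) (hfree : IsFreeIn C U)
    (hT : AgeIn U T) (t : Arr C T) (X : CCS C T)
    (l : List {g : (t.A : Type) ↪[L] X.A // ∀ a, X.c (g a) = t.c (t.f a)}) :
    ∀ (Y : CCS C T) (e : (X.A : Type) ↪[L] Y.A), (∀ x, Y.c (e x) = X.c x) →
    ∃ (Z : CCS C T) (e' : (Y.A : Type) ↪[L] Z.A), (∀ x, Z.c (e' x) = Y.c x) ∧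
      ∀ g ∈ l, ∃ h : (t.B : Type) ↪[L] Z.A,
        (∀ a, h (t.f a) = e' (e (g.1 a))) ∧ (∀ b, Z.c (h b) = t.c b) := by
  induction l with
  | nil =>
    intro Y e he
    exact ⟨Y, Embedding.refl L Y.A, fun x => rfl, by simp⟩
  | cons g l ih =>
    intro Y e he
    obtain ⟨D, hD, g₁, g₂, d, hcomm, hcol1, hcol2⟩ :=
      camalg hU hfree hT t.hA t.hB Y.mem t.f (e.comp g.1) t.c Y.c
        (fun a => by rw [Embedding.comp_apply, he, g.2])
    obtain ⟨Z, e', hcolZ, hl⟩ := ih ⟨D, d, hD⟩ (g₂.comp e)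
      (fun x => by rw [Embedding.comp_apply]; exact (hcol2 _).trans (he x))
    refine ⟨Z, e'.comp g₂, fun x => by rw [Embedding.comp_apply]; exact (hcolZ _).trans (hcol2 x),
      ?_⟩
    intro g' hg'
    rcases List.mem_cons.mp hg' with rfl | hg'
    · refine ⟨e'.comp g₁, fun a => ?_, fun b => ?_⟩
      · simp only [Embedding.comp_apply, hcomm a]
      · simp only [Embedding.comp_apply]
        exact (hcolZ _).trans (hcol1 b)
    · obtain ⟨h, h1, h2⟩ := hl g' hg'
      exact ⟨h, fun a => by simpa using h1 a, h2⟩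

lemma step_exists (hU : IsStrictFraisse U) (hC : IsFraisseClass C) (hfree : IsFreeIn C U)
    (hT : AgeIn U T) (t : Arr C T) (X : CCS C T) :
    ∃ (Y : CCS C T) (e : (X.A : Type) ↪[L] Y.A), (∀ x, Y.c (e x) = X.c x) ∧
      ∀ (g : (t.A : Type) ↪[L] X.A), (∀ a, X.c (g a) = t.c (t.f a)) →
        ∃ h : (t.B : Type) ↪[L] Y.A, (∀ a, h (t.f a) = e (g a)) ∧ (∀ b, Y.c (h b) = t.c b) := by
  haveI : Finite (t.A : Type) := hC.finite _ t.hA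
  haveI : Finite (X.A : Type) := hC.finite _ X.mem
  haveI : Finite ((t.A : Type) ↪[L] (X.A : Type)) :=
    Finite.of_injective _ (DFunLike.coe_injective (F := (t.A : Type) ↪[L] (X.A : Type)))
  obtain ⟨l, -, hl⟩ :=
    Finite.exists_univ_list {g : (t.A : Type) ↪[L] X.A // ∀ a, X.c (g a) = t.c (t.f a)}
  obtain ⟨Z, e', hcol, hh⟩ := step_list hU hC hfree hT t X l X (Embedding.refl L X.A)
    (fun x => rfl)
  refine ⟨Z, e', hcol, fun g hg => ?_⟩
  obtain ⟨h', h1, h2⟩ := hh ⟨g, hg⟩ (hl _)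
  exact ⟨h', fun a => by simpa using h1 a, h2⟩

variable (U C T) in
/-- All the data needed for the chain construction. -/
structure Setup where
  hU : IsStrictFraisse U
  hC : IsFraisseClass C
  hfree : IsFreeIn C U
  hT : AgeIn U T
  ar : ℕ → Arr C T
  har : ∀ (A B : Bundled.{0} L.Structure), A ∈ C → B ∈ C →
    ∀ (f : A ↪[L] B) (c : B →[L] T), ∃ n, ArrCovers (ar n) A B f c
  X₀ : CCS C T

variable (S : Setup U C T)

/-- The chain of finite colored structures. -/
noncomputable def chainG : ℕ → CCS C T := fun n =>
  Nat.rec S.X₀ (fun m X =>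
    (step_exists S.hU S.hC S.hfree S.hT (S.ar (Nat.unpair m).1) X).choose) n

/-- The carriers of the chain. -/
abbrev Gs (n : ℕ) : Type := (chainG S n).A

/-- The connecting embeddings of the chain. -/
noncomputable def chainE (n : ℕ) : Gs S n ↪[L] Gs S (n + 1) :=
  (step_exists S.hU S.hC S.hfree S.hT (S.ar (Nat.unpair n).1) (chainG S n)).choose_spec.choose

lemma chainE_col (n : ℕ) (x : Gs S n) :
    (chainG S (n + 1)).c (chainE S n x) = (chainG S n).c x :=
  (step_exists S.hU S.hC S.hfree S.hT (S.ar (Nat.unpair n).1)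
    (chainG S n)).choose_spec.choose_spec.1 x

lemma chain_task (n : ℕ) (g : ((S.ar (Nat.unpair n).1).A : Type) ↪[L] Gs S n)
    (hg : ∀ a, (chainG S n).c (g a) = (S.ar (Nat.unpair n).1).c ((S.ar (Nat.unpair n).1).f a)) :
    ∃ h : ((S.ar (Nat.unpair n).1).B : Type) ↪[L] Gs S (n + 1),
      (∀ a, h ((S.ar (Nat.unpair n).1).f a) = chainE S n (g a)) ∧
      (∀ b, (chainG S (n + 1)).c (h b) = (S.ar (Nat.unpair n).1).c b) :=
  (step_exists S.hU S.hC S.hfree S.hT (S.ar (Nat.unpair n).1)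
    (chainG S n)).choose_spec.choose_spec.2 g hg

/-- The directed system of the chain. -/
noncomputable abbrev fsys : ∀ i j : ℕ, i ≤ j → Gs S i ↪[L] Gs S j :=
  DirectedSystem.natLERec (chainE S)

noncomputable instance : DirectedSystem (Gs S) (fun i j h => fsys S i j h) :=
  DirectedSystem.natLERec.directedSystem _

lemma fsys_succ (n : ℕ) (h : n ≤ n + 1) (x : Gs S n) :
    fsys S n (n + 1) h x = chainE S n x := by
  have := DirectedSystem.coe_natLERec (chainE S) n (n + 1) h
  rw [show (fsys S n (n+1) h : Gs S n → Gs S (n+1)) x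
      = Nat.leRecOn h (fun {k} => ⇑(chainE S k)) x from congrFun this x]
  rw [Nat.leRecOn_succ']

lemma fsys_col : ∀ (m n : ℕ) (h : m ≤ n) (x : Gs S m),
    (chainG S n).c (fsys S m n h x) = (chainG S m).c x := by
  intro m n h x
  induction n, h using Nat.le_induction with
  | base =>
    rw [FirstOrder.Language.DirectedSystem.map_self (fsys S) x]
  | succ n hmn ih =>
    have hmap := FirstOrder.Language.DirectedSystem.map_map (fsys S) hmn (Nat.le_succ n) x
    rw [← hmap, fsys_succ S n (Nat.le_succ n), chainE_col, ih]
end Chain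
section Limit
variable [L.IsRelational]
variable {U C : Set (Bundled.{0} L.Structure)} {T : Type} [L.Structure T] [Countable T]
variable (S : Setup U C T)

/-- The direct limit of the chain. -/
noncomputable def limitM : Type :=
  Language.DirectLimit (Gs S) (fsys S)

noncomputable instance : L.Structure (limitM S) := by
  unfold limitM; infer_instance

/-- The canonical embedding of a chain member into the limit. -/
noncomputable def toLim (n : ℕ) : Gs S n ↪[L] limitM S :=
  DirectLimit.of L ℕ (Gs S) (fsys S) n

lemma toLim_fsys {m n : ℕ} (h : m ≤ n) (x : Gs S m) :
    toLim S n (fsys S m n h x) = toLim S m x :=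
  DirectLimit.of_f

lemma toLim_chainE (n : ℕ) (x : Gs S n) :
    toLim S (n + 1) (chainE S n x) = toLim S n x := by
  rw [← fsys_succ S n (Nat.le_succ n) x, toLim_fsys]

instance : Countable (limitM S) := by
  haveI : ∀ n, Countable (Gs S n) := fun n => by
    haveI := S.hC.finite _ (chainG S n).mem
    exact Finite.to_countable
  have hsurj : Function.Surjective
      (fun p : Σ n, Gs S n => toLim S p.1 p.2) := by
    intro z
    obtain ⟨i, x, hx⟩ := DirectLimit.exists_of (f := fsys S) (z := z)
    exact ⟨⟨i, x⟩, hx⟩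
  exact hsurj.countable

/-- The coloring of the limit. -/
noncomputable def colorU : limitM S →[L] T where
  toFun := Quotient.lift (fun p : Structure.Sigma (fsys S) => (chainG S p.1).c p.2)
    (by
      rintro ⟨i, x⟩ ⟨j, y⟩ ⟨k, ik, jk, hk⟩
      have h1 := fsys_col S i k ik x
      have h2 := fsys_col S j k jk y
      dsimp only at *
      rw [← h1, ← h2, hk])
  map_fun' F := isEmptyElim F
  map_rel' {n} r x h := by
    obtain ⟨i, y, hy⟩ := DirectLimit.exists_quotient_mk'_sigma_mk'_eq (Gs S) (fsys S) x
    subst hy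
    replace h := (DirectLimit.relMap_quotient_mk'_sigma_mk' (Gs S) (fsys S)).mp h
    have h2 := (chainG S i).c.map_rel r y h
    exact h2

lemma colorU_toLim (n : ℕ) (x : Gs S n) :
    colorU S (toLim S n x) = (chainG S n).c x := rfl

/-- Finite structures embedding into the limit factor through the chain. -/
lemma factor {A : Type} [L.Structure A] [Finite A] (e : A ↪[L] limitM S) :
    ∃ (n : ℕ) (g : A ↪[L] Gs S n), ∀ a, toLim S n (g a) = e a := by
  obtain ⟨i, y, hy⟩ := DirectLimit.exists_quotient_mk'_sigma_mk'_eq (Gs S) (fsys S) ⇑e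
  have hy' : ∀ a, toLim S i (y a) = e a := fun a => (congrFun hy a).symm
  refine ⟨i, ⟨⟨y, fun a b hab => e.injective ?_⟩, isEmptyElim, fun {n} r x => ?_⟩, hy'⟩
  · rw [← hy' a, ← hy' b, hab]
  · constructor
    · intro hr
      have := ((toLim S i).map_rel r (y ∘ x)).2 hr
      have heq : (⇑(toLim S i) ∘ (y ∘ x)) = ⇑e ∘ x := funext fun a => hy' (x a)
      rw [heq] at this
      exact (e.map_rel r x).1 this
    · intro hr
      have := (e.map_rel r x).2 hr
      have heq : (⇑e ∘ x) = ⇑(toLim S i) ∘ (y ∘ x) := funext fun a => (hy' (x a)).symm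
      rw [heq] at this
      exact ((toLim S i).map_rel r (y ∘ x)).1 this

lemma ageM : AgeIn C (limitM S) := by
  intro A hfin ⟨e⟩
  haveI := hfin
  obtain ⟨n, g, -⟩ := factor S e
  exact S.hC.hereditary _ (chainG S n).mem A hfin ⟨g⟩

/-- The extension property of the limit. -/
lemma ext_prop (A B : Bundled.{0} L.Structure) (hA : A ∈ C) (hB : B ∈ C)
    (f : A ↪[L] B) (c : B →[L] T) (g : A ↪[L] limitM S)
    (hg : ∀ a, colorU S (g a) = c (f a)) :
    ∃ h : B ↪[L] limitM S, (∀ a, h (f a) = g a) ∧ (∀ b, colorU S (h b) = c b) := by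
  haveI : Finite A := S.hC.finite _ hA
  obtain ⟨n, g0, hg0⟩ := factor S g
  obtain ⟨i, α, β, hαβ, hc⟩ := S.har A B hA hB f c
  have hn : n ≤ Nat.pair i n := Nat.right_le_pair i n
  have hi : (Nat.unpair (Nat.pair i n)).1 = i := by rw [Nat.unpair_pair]
  set s := Nat.pair i n with hs
  -- the colored embedding of (S.ar i).A into stage s
  have hg'col : ∀ a, (chainG S s).c
      (((fsys S n s hn).comp (g0.comp α.symm.toEmbedding)) a) = (S.ar i).c ((S.ar i).f a) := by
    intro a
    simp only [Embedding.comp_apply]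
    rw [fsys_col S n s hn]
    have h1 : (chainG S n).c (g0 (α.symm.toEmbedding a)) = colorU S (g (α.symm a)) := by
      rw [← colorU_toLim, hg0]
      rfl
    rw [h1, hg (α.symm a)]
    have h2 : (S.ar i).f a = β (f (α.symm a)) := by
      rw [hαβ (α.symm a), FirstOrder.Language.Equiv.apply_symm_apply]
    rw [h2, hc]
  -- realize the task at stage s
  have htask := chain_task S s
  rw [hi] at htask
  obtain ⟨h', hh1, hh2⟩ := htask _ hg'col
  refine ⟨(toLim S (s+1)).comp (h'.comp β.toEmbedding), fun a => ?_, fun b => ?_⟩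
  · simp only [Embedding.comp_apply, FirstOrder.Language.Equiv.coe_toEmbedding]
    rw [hαβ a, hh1 (α a), toLim_chainE]
    simp only [Embedding.comp_apply]
    rw [toLim_fsys]
    have h3 : α.symm.toEmbedding (α a) = a := by
      rw [FirstOrder.Language.Equiv.coe_toEmbedding]; exact α.symm_apply_apply a
    rw [h3, hg0]
  · simp only [Embedding.comp_apply, FirstOrder.Language.Equiv.coe_toEmbedding]
    rw [colorU_toLim, hh2, hc]

end Limit
section Univ
variable [L.IsRelational]
variable {U C : Set (Bundled.{0} L.Structure)} {T : Type} [L.Structure T] [Countable T]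
variable (S : Setup U C T)

lemma ageMU : AgeIn U (limitM S) := fun A hf he => S.hfree.1 (ageM S A hf he)

lemma univLemma (A : Bundled.{0} L.Structure) (hcount : Countable A) (hage : AgeIn C A)
    (h : A →[L] T) : ∃ e : A ↪[L] limitM S, ∀ a, colorU S (e a) = h a := by
  classical
  by_cases hne : Nonempty A
  case neg =>
    haveI : IsEmpty (↥A) := not_nonempty_iff.mp hne
    have hAC : A ∈ C := hage A inferInstance ⟨Embedding.refl L A⟩
    exact ⟨emptyEmb S.hU.1 (S.hfree.1 hAC) (limitM S) (ageMU S), fun a => isEmptyElim a⟩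
  case pos =>
    haveI := hcount
    haveI := hne
    obtain ⟨f, hf⟩ := exists_surjective_nat (↥A)
    set s : ℕ → Set A := fun n => f '' {k | k < n} with hsdef
    have smono : ∀ {m n : ℕ}, m ≤ n → s m ⊆ s n :=
      fun {m n} hmn => Set.image_mono (fun k hk => lt_of_lt_of_le hk hmn)
    have sfin : ∀ n, (s n).Finite := fun n => (Set.finite_lt_nat n).image f
    set Sub : ℕ → L.Substructure A := fun n => setSub (s n) with hSubdef
    set An : ℕ → Bundled.{0} L.Structure := fun n => ⟨↥(Sub n), inferInstance⟩ with hAndef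
    have hfinn : ∀ n, Finite (An n : Type) := fun n => (sfin n).to_subtype
    have hmem : ∀ n, An n ∈ C := fun n => hage (An n) (hfinn n) ⟨(Sub n).subtype⟩
    -- base of the recursion
    haveI hempty0 : IsEmpty (An 0 : Type) :=
      ⟨fun x => by obtain ⟨m, hm, -⟩ := x.2; exact Nat.not_lt_zero m hm⟩
    have hbase : {g : (An 0 : Type) ↪[L] limitM S // ∀ x, colorU S (g x) = h x.1} :=
      ⟨emptyEmb S.hU.1 (S.hfree.1 (hmem 0)) (limitM S) (ageMU S), fun x => isEmptyElim x⟩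
    -- the recursion step
    have step : ∀ (n : ℕ) (q : {g : (An n : Type) ↪[L] limitM S // ∀ x, colorU S (g x) = h x.1}),
        {q' : {g : (An (n+1) : Type) ↪[L] limitM S // ∀ x, colorU S (g x) = h x.1} //
          ∀ x : (An n : Type),
            q'.1 (Substructure.inclusion (smono (Nat.le_succ n)) x) = q.1 x} := by
      intro n q
      have hext := ext_prop S (An n) (An (n+1)) (hmem n) (hmem (n+1))
        (Substructure.inclusion (smono (Nat.le_succ n))) (h.comp (Sub (n+1)).subtype.toHom)
        q.1 (fun a => by rw [q.2 a]; rfl)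
      exact ⟨⟨hext.choose, fun x => by rw [hext.choose_spec.2 x]; rfl⟩,
        fun x => hext.choose_spec.1 x⟩
    let seq : ∀ n, {g : (An n : Type) ↪[L] limitM S // ∀ x, colorU S (g x) = h x.1} :=
      fun n => Nat.rec hbase (fun m q => (step m q).1) n
    have seq_coh : ∀ (n : ℕ) (x : (An n : Type)),
        (seq (n+1)).1 (Substructure.inclusion (smono (Nat.le_succ n)) x) = (seq n).1 x :=
      fun n => (step n (seq n)).2
    have coh : ∀ (m n : ℕ) (hmn : m ≤ n) (a : (↥A)) (ha : a ∈ s m),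
        (seq n).1 ⟨a, smono hmn ha⟩ = (seq m).1 ⟨a, ha⟩ := by
      intro m n hmn a ha
      induction n, hmn using Nat.le_induction with
      | base => rfl
      | succ n hmn ih => exact (seq_coh n ⟨a, smono hmn ha⟩).trans ih
    let idx : (↥A) → ℕ := fun a => Classical.choose (hf a) + 1
    have memidx : ∀ a, a ∈ s (idx a) :=
      fun a => ⟨Classical.choose (hf a), Nat.lt_succ_self _, Classical.choose_spec (hf a)⟩
    let F : (↥A) → limitM S := fun a => (seq (idx a)).1 ⟨a, memidx a⟩
    have key : ∀ (n : ℕ) (a : (↥A)) (ha : a ∈ s n), F a = (seq n).1 ⟨a, ha⟩ := by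
      intro n a ha
      have h1 := coh (idx a) (max (idx a) n) (le_max_left _ _) a (memidx a)
      have h2 := coh n (max (idx a) n) (le_max_right _ _) a ha
      exact h1.symm.trans h2
    refine ⟨⟨⟨F, fun a b hab => ?_⟩, isEmptyElim, fun {k} r x => ?_⟩, fun a => ?_⟩
    · -- injectivity
      have h1 := key (max (idx a) (idx b)) a (smono (le_max_left _ _) (memidx a))
      have h2 := key (max (idx a) (idx b)) b (smono (le_max_right _ _) (memidx b))
      rw [h1, h2] at hab
      have h3 := (seq (max (idx a) (idx b))).1.injective hab
      exact congrArg Subtype.val h3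
    · -- relations
      set N : ℕ := Finset.univ.sup (fun j : Fin k => idx (x j)) with hN
      have hmem' : ∀ j, x j ∈ s N :=
        fun j => smono (Finset.le_sup (Finset.mem_univ j)) (memidx (x j))
      have heq : (F ∘ x) = ⇑(seq N).1 ∘ (fun j => (⟨x j, hmem' j⟩ : (An N : Type))) :=
        funext fun j => key N (x j) (hmem' j)
      rw [heq]
      rw [(seq N).1.map_rel r (fun j => (⟨x j, hmem' j⟩ : (An N : Type)))]
      have h2 := (Sub N).subtype.map_rel r (fun j => (⟨x j, hmem' j⟩ : (An N : Type)))
      have heq2 : (⇑(Sub N).subtype ∘ fun j => (⟨x j, hmem' j⟩ : (An N : Type))) = x :=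
        funext fun j => rfl
      rw [heq2] at h2
      exact h2.symm
    · -- colors
      exact (seq (idx a)).2 ⟨a, memidx a⟩

end Univ
/-- If `𝒰` is a strict Fraïssé class, `𝒞` a Fraïssé class free in `𝒰`, and
`T` a countable structure with `Age(T) ⊆ 𝒰`, then `𝒞̄ ∩ CSP(T)-bar` has a universal element;
moreover if `Age(T) ⊆ 𝒞` then the universal element can be chosen so that `T` is a retract
of it. -/
theorem exists_universal_in_csp (L : FirstOrder.Language.{u, v}) [L.IsRelational]
    (U C : Set (Bundled.{0} L.Structure))
    (hU : IsStrictFraisse U) (hC : IsFraisseClass C) (hfree : IsFreeIn C U)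
    (T : Type) [L.Structure T] [Countable T] (hT : AgeIn U T) :
    (∃ (Ub : Bundled.{0} L.Structure) (_u : Ub →[L] T), InBar C Ub ∧
      ∀ A : Bundled.{0} L.Structure, InBar C A → Nonempty (A →[L] T) →
        Nonempty (A ↪[L] Ub)) ∧
    (AgeIn C T →
      ∃ (Ub : Bundled.{0} L.Structure) (u : Ub →[L] T) (s : T →[L] Ub), InBar C Ub ∧
        (∀ A : Bundled.{0} L.Structure, InBar C A → Nonempty (A →[L] T) →
          Nonempty (A ↪[L] Ub)) ∧
        ∀ t, u (s t) = t) := by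
  classical
  obtain ⟨A₀, hA₀⟩ := hC.nonempty
  have hEC : emptyBundled (L := L) (↥A₀) ∈ C :=
    hC.hereditary A₀ hA₀ _ inferInstance ⟨Substructure.subtype _⟩
  have hEU : emptyBundled (L := L) (↥A₀) ∈ U := hfree.1 hEC
  let c₀ : (emptyBundled (L := L) (↥A₀) : Type) →[L] T := (emptyEmb hU.1 hEU T hT).toHom
  let t₀ : Arr C T := ⟨_, _, hEC, hEC, Embedding.refl L _, c₀⟩
  obtain ⟨ar, har⟩ := exists_arr_enum hC t₀
  let S : Setup U C T := ⟨hU, hC, hfree, hT, ar, har, ⟨emptyBundled (L := L) (↥A₀), c₀, hEC⟩⟩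
  have hbar : InBar C (Bundled.of (limitM S)) := ⟨(inferInstance : Countable (limitM S)), ageM S⟩
  constructor
  · refine ⟨Bundled.of (limitM S), colorU S, hbar, ?_⟩
    rintro A ⟨hcnt, hage⟩ ⟨hom⟩
    obtain ⟨e, -⟩ := univLemma S A hcnt hage hom
    exact ⟨e⟩
  · intro hTC
    obtain ⟨e, he⟩ := univLemma S (Bundled.of T) (inferInstance : Countable T) hTC (Hom.id L T)
    refine ⟨Bundled.of (limitM S), colorU S, e.toHom, hbar, ?_, ?_⟩
    · rintro A ⟨hcnt, hage⟩ ⟨hom⟩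
      obtain ⟨e', -⟩ := univLemma S A hcnt hage hom
      exact ⟨e'⟩
    · intro t
      exact he t

end Stmt3
end

section
/- Let (U,u) be a universal homogeneous T-colored structure in 𝒞̄. If the Fraïssé limit of 𝒞 is finite or has an oligomorphic automorphism group, and if T is finite, then the strong automorphism group sAut(U,u) = { f ∈ Aut(U) : u ∘ f = u } is oligomorphic, i.e. for every n ≥ 1 it has only finitely many orbits on n-tuples of U. -/
open FirstOrder Language CategoryTheory

universe u v

namespace Stmt8

/-- The automorphism group of `M` is oligomorphic: for every `n` there are only finitely
many orbits on `n`-tuples. -/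
def AutOligomorphic (L : FirstOrder.Language.{u, v}) (M : Type*) [L.Structure M] : Prop :=
  ∀ n : ℕ, ∃ S : Set (Fin n → M), S.Finite ∧
    ∀ x : Fin n → M, ∃ y ∈ S, ∃ g : M ≃[L] M, ⇑g ∘ y = x

variable {L : FirstOrder.Language.{u, v}}

/-- The age of `M` is contained in the class `C` of finite structures. -/
def AgeIn (C : Set (Bundled.{0} L.Structure)) (M : Type*) [L.Structure M] : Prop :=
  ∀ A : Bundled.{0} L.Structure, Finite A → Nonempty (A ↪[L] M) → A ∈ C

/-- `A` is a countable structure whose age is contained in `C`, i.e. `A ∈ C̄`. -/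
def InBar (C : Set (Bundled.{0} L.Structure)) (A : Bundled.{0} L.Structure) : Prop :=
  Countable A ∧ AgeIn C A

/-- A Fraïssé class of finite structures: nonempty, isomorphism-closed, countably many
isomorphism types, hereditary, with the joint embedding and amalgamation properties. -/
structure IsFraisseClass (C : Set (Bundled.{0} L.Structure)) : Prop where
  nonempty : C.Nonempty
  finite : ∀ A ∈ C, Finite A
  isoInvariant : ∀ A B : Bundled.{0} L.Structure, Nonempty (A ≃[L] B) → (A ∈ C ↔ B ∈ C)
  countableTypes : ∃ S : Set (Bundled.{0} L.Structure), S.Countable ∧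
    ∀ A ∈ C, ∃ B ∈ S, Nonempty (A ≃[L] B)
  hereditary : ∀ A ∈ C, ∀ B : Bundled.{0} L.Structure, Finite B → Nonempty (B ↪[L] A) → B ∈ C
  jep : ∀ A ∈ C, ∀ B ∈ C, ∃ D ∈ C, Nonempty (A ↪[L] D) ∧ Nonempty (B ↪[L] D)
  amalgamation : ∀ A B₁ B₂ : Bundled.{0} L.Structure, A ∈ C → B₁ ∈ C → B₂ ∈ C →
    ∀ (f₁ : A ↪[L] B₁) (f₂ : A ↪[L] B₂),
      ∃ (D : Bundled.{0} L.Structure) (_ : D ∈ C) (g₁ : B₁ ↪[L] D) (g₂ : B₂ ↪[L] D),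
        ∀ x, g₁ (f₁ x) = g₂ (f₂ x)

/-- `(P, g₁, g₂)` is a pushout of the pair of embeddings `(f₁, f₂)` in the category
`(K̄, →)` of countable structures with age contained in `K`, with homomorphisms. -/
def IsPushoutIn (K : Set (Bundled.{0} L.Structure)) {A B₁ B₂ : Bundled.{0} L.Structure}
    (f₁ : A ↪[L] B₁) (f₂ : A ↪[L] B₂) (P : Bundled.{0} L.Structure)
    (g₁ : B₁ →[L] P) (g₂ : B₂ →[L] P) : Prop :=
  InBar K P ∧ (∀ x, g₁ (f₁ x) = g₂ (f₂ x)) ∧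
  ∀ D : Bundled.{0} L.Structure, InBar K D →
    ∀ (h₁ : B₁ →[L] D) (h₂ : B₂ →[L] D), (∀ x, h₁ (f₁ x) = h₂ (f₂ x)) →
      ∃! h : P →[L] D, h.comp g₁ = h₁ ∧ h.comp g₂ = h₂

/-- `(P, g₁, g₂)` is a coproduct of `B₁, B₂` in the category `(K̄, →)`. -/
def IsCoproductIn (K : Set (Bundled.{0} L.Structure)) (B₁ B₂ P : Bundled.{0} L.Structure)
    (g₁ : B₁ →[L] P) (g₂ : B₂ →[L] P) : Prop :=
  InBar K P ∧
  ∀ D : Bundled.{0} L.Structure, InBar K D → ∀ (h₁ : B₁ →[L] D) (h₂ : B₂ →[L] D),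
    ∃! h : P →[L] D, h.comp g₁ = h₁ ∧ h.comp g₂ = h₂

/-- A strict Fraïssé class: a Fraïssé class in which every pair of embeddings with common
domain has a pushout in `(K̄,→)`, and every pair of members has a coproduct in `(K̄,→)`. -/
def IsStrictFraisse (K : Set (Bundled.{0} L.Structure)) : Prop :=
  IsFraisseClass K ∧
  (∀ A B₁ B₂ : Bundled.{0} L.Structure, A ∈ K → B₁ ∈ K → B₂ ∈ K →
    ∀ (f₁ : A ↪[L] B₁) (f₂ : A ↪[L] B₂),
      ∃ (P : Bundled.{0} L.Structure) (g₁ : B₁ →[L] P) (g₂ : B₂ →[L] P),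
        IsPushoutIn K f₁ f₂ P g₁ g₂) ∧
  (∀ B₁ B₂ : Bundled.{0} L.Structure, B₁ ∈ K → B₂ ∈ K →
    ∃ (P : Bundled.{0} L.Structure) (g₁ : B₁ →[L] P) (g₂ : B₂ →[L] P),
      IsCoproductIn K B₁ B₂ P g₁ g₂)

/-- `C` is free in the strict Fraïssé class `K`: `C ⊆ K` and `C` is closed under the
canonical (pushout) amalgams and under finite coproducts taken in `(K̄,→)`. -/
def IsFreeIn (C K : Set (Bundled.{0} L.Structure)) : Prop :=
  C ⊆ K ∧
  (∀ A B₁ B₂ : Bundled.{0} L.Structure, A ∈ C → B₁ ∈ C → B₂ ∈ C →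
    ∀ (f₁ : A ↪[L] B₁) (f₂ : A ↪[L] B₂) (P : Bundled.{0} L.Structure)
      (g₁ : B₁ →[L] P) (g₂ : B₂ →[L] P), IsPushoutIn K f₁ f₂ P g₁ g₂ → P ∈ C) ∧
  (∀ B₁ B₂ : Bundled.{0} L.Structure, B₁ ∈ C → B₂ ∈ C →
    ∀ (P : Bundled.{0} L.Structure) (g₁ : B₁ →[L] P) (g₂ : B₂ →[L] P),
      IsCoproductIn K B₁ B₂ P g₁ g₂ → P ∈ C)

/-- `F` is a Fraïssé limit of the class `C`: a countable structure whose age is exactly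
`C` and which is ultrahomogeneous. -/
def IsFraisseLimitOf (C : Set (Bundled.{0} L.Structure)) (F : Bundled.{0} L.Structure) : Prop :=
  Countable F ∧
  (∀ A : Bundled.{0} L.Structure, Finite A → (A ∈ C ↔ Nonempty (A ↪[L] F))) ∧
  ∀ A : Bundled.{0} L.Structure, Finite A → ∀ f g : A ↪[L] F,
    ∃ h : F ≃[L] F, ∀ x, h (f x) = g x

/-- `(U,u)` is a universal `T`-colored structure in `C̄`: every countable `T`-colored
structure `(A,a)` in `C̄` admits an embedding `ι : A ↪ U` with `u ∘ ι = a`. -/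
def ColUniversal (C : Set (Bundled.{0} L.Structure)) {T : Type*} [L.Structure T]
    (Ub : Bundled.{0} L.Structure) (u : Ub →[L] T) : Prop :=
  ∀ (A : Bundled.{0} L.Structure) (a : A →[L] T), InBar C A →
    ∃ ι : A ↪[L] Ub, ∀ x, u (ι x) = a x

/-- `(U,u)` is a homogeneous `T`-colored structure in `C̄`: any two embeddings of a finite
`T`-colored structure `(A,a)` of `C̄` into `(U,u)` differ by an automorphism of `(U,u)`. -/
def ColHomogeneous (C : Set (Bundled.{0} L.Structure)) {T : Type*} [L.Structure T]
    (Ub : Bundled.{0} L.Structure) (u : Ub →[L] T) : Prop :=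
  ∀ (A : Bundled.{0} L.Structure) (a : A →[L] T), InBar C A → Finite A →
    ∀ ι₁ ι₂ : A ↪[L] Ub, (∀ x, u (ι₁ x) = a x) → (∀ x, u (ι₂ x) = a x) →
      ∃ f : Ub ≃[L] Ub, (∀ y, u (f y) = u y) ∧ ∀ x, f (ι₁ x) = ι₂ x

section Aux

variable [L.IsRelational]

/-- In a relational language, the range of a tuple is (the carrier of) a substructure. -/
def rangeSub {M : Type*} [L.Structure M] {n : ℕ} (x : Fin n → M) : L.Substructure M :=
  ⟨Set.range x, fun f => isEmptyElim f⟩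

lemma mem_rangeSub {M : Type*} [L.Structure M] {n : ℕ} (x : Fin n → M) (i : Fin n) :
    x i ∈ rangeSub (L := L) x :=
  ⟨i, rfl⟩

/-- Key transfer lemma: if the images of two tuples in some structure `F` are matched up
by an automorphism of `F`, and the tuples have the same colors, then the tuples are in
the same orbit of the strong automorphism group of `(Ub, u)`. -/
lemma key {T : Type} [L.Structure T] {C : Set (Bundled.{0} L.Structure)}
    {Ub : Bundled.{0} L.Structure} {u : Ub →[L] T} (hUb : InBar C Ub)
    (hhom : ColHomogeneous C Ub u) {F : Bundled.{0} L.Structure} {n : ℕ}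
    {x y : Fin n → Ub}
    (ex : ↥(rangeSub (L := L) x) ↪[L] F) (ey : ↥(rangeSub (L := L) y) ↪[L] F)
    (g : F ≃[L] F)
    (hg : ∀ i, g (ex ⟨x i, mem_rangeSub x i⟩) = ey ⟨y i, mem_rangeSub y i⟩)
    (hc : ∀ i, u (x i) = u (y i)) :
    ∃ f : Ub ≃[L] Ub, (∀ z, u (f z) = u z) ∧ ∀ i, f (x i) = y i := by
  classical
  have hxy : ∀ i j, x i = x j → y i = y j := by
    intro i j h
    have h1 : ey ⟨y i, mem_rangeSub y i⟩ = ey ⟨y j, mem_rangeSub y j⟩ := by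
      rw [← hg i, ← hg j]
      exact congrArg g (congrArg ex (Subtype.ext h))
    exact congrArg Subtype.val (ey.injective h1)
  have hyx : ∀ i j, y i = y j → x i = x j := by
    intro i j h
    have h1 : g (ex ⟨x i, mem_rangeSub x i⟩) = g (ex ⟨x j, mem_rangeSub x j⟩) := by
      rw [hg i, hg j]
      exact congrArg ey (Subtype.ext h)
    exact congrArg Subtype.val (ex.injective (g.injective h1))
  have hmem : ∀ a : ↥(rangeSub (L := L) x), ∃ i, x i = (a : Ub) := fun a => a.2
  choose idx hidx using hmem
  have hinj : Function.Injective (fun a : ↥(rangeSub (L := L) x) => (y (idx a) : Ub)) := by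
    intro a b h
    have hx : x (idx a) = x (idx b) := hyx _ _ h
    exact Subtype.ext (by rw [← hidx a, ← hidx b]; exact hx)
  have hvx : ∀ {m : ℕ} (v : Fin m → ↥(rangeSub (L := L) x)) (i : Fin m),
      (⟨x (idx (v i)), mem_rangeSub x (idx (v i))⟩ : ↥(rangeSub (L := L) x)) = v i :=
    fun v i => Subtype.ext (hidx (v i))
  let ψ : ↥(rangeSub (L := L) x) ↪[L] Ub :=
    { toFun := fun a => y (idx a)
      inj' := hinj
      map_fun' := fun f => isEmptyElim f
      map_rel' := by
        intro m r v
        have h1 : (fun a : ↥(rangeSub (L := L) x) => (y (idx a) : Ub)) ∘ v =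
            ⇑((rangeSub (L := L) y).subtype) ∘
              (fun i => (⟨y (idx (v i)), mem_rangeSub y (idx (v i))⟩ :
                ↥(rangeSub (L := L) y))) := rfl
        have h2 : ⇑ey ∘ (fun i => (⟨y (idx (v i)), mem_rangeSub y (idx (v i))⟩ :
            ↥(rangeSub (L := L) y))) = ⇑g ∘ (⇑ex ∘ v) := by
          funext i
          simp only [Function.comp_apply]
          rw [← hg (idx (v i)), hvx v i]
        rw [h1, Embedding.map_rel,
          ← Embedding.map_rel ey r (fun i => (⟨y (idx (v i)),
            mem_rangeSub y (idx (v i))⟩ : ↥(rangeSub (L := L) y))),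
          h2, Equiv.map_rel, Embedding.map_rel] }
  haveI hfin : Finite ↥(rangeSub (L := L) x) := Set.Finite.to_subtype (Set.finite_range x)
  have hage : AgeIn C (↥(rangeSub (L := L) x)) := by
    intro B hB he
    exact hUb.2 B hB (he.map fun e => ((rangeSub (L := L) x).subtype).comp e)
  obtain ⟨f, hf1, hf2⟩ :=
    hhom (⟨↥(rangeSub (L := L) x), inferInstance⟩ : Bundled.{0} L.Structure)
      (u.comp ((rangeSub (L := L) x).subtype).toHom)
      ⟨Finite.to_countable, hage⟩ hfin
      ((rangeSub (L := L) x).subtype) ψ (fun _ => rfl)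
      (fun z => by
        show u (y (idx z)) = u (z : Ub)
        rw [← hc (idx z), hidx z])
  refine ⟨f, hf1, fun i => ?_⟩
  have h3 := hf2 ⟨x i, mem_rangeSub x i⟩
  have h4 : y (idx ⟨x i, mem_rangeSub x i⟩) = y i :=
    hxy _ _ (hidx ⟨x i, mem_rangeSub x i⟩)
  exact h3.trans h4

end Aux

/-- If the Fraïssé limit of `𝒞` is finite or has an oligomorphic
automorphism group and `T` is finite, then the strong automorphism group of a universal
homogeneous `T`-colored structure `(U,u)` in `𝒞̄` is oligomorphic. -/
theorem sAut_oligomorphic (L : FirstOrder.Language.{u, v}) [L.IsRelational]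
    (U C : Set (Bundled.{0} L.Structure))
    (hU : IsStrictFraisse U) (hC : IsFraisseClass C) (hfree : IsFreeIn C U)
    (T : Type) [L.Structure T] [Countable T] (hT : AgeIn U T)
    (Ub : Bundled.{0} L.Structure) (u : Ub →[L] T) (hUb : InBar C Ub)
    (huniv : ColUniversal C Ub u) (hhom : ColHomogeneous C Ub u)
    (hlim : ∃ F : Bundled.{0} L.Structure, IsFraisseLimitOf C F ∧
      (Finite F ∨ AutOligomorphic L F))
    (hTfin : Finite T) :
    ∀ n : ℕ, ∃ S : Set (Fin n → Ub), S.Finite ∧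
      ∀ x : Fin n → Ub, ∃ y ∈ S, ∃ f : Ub ≃[L] Ub,
        (∀ z, u (f z) = u z) ∧ ⇑f ∘ y = x := by
  intro n
  classical
  by_cases hne : Nonempty (Fin n → (Ub : Type))
  swap
  · exact ⟨∅, Set.finite_empty, fun x => absurd ⟨x⟩ hne⟩
  obtain ⟨F, hF, hFalt⟩ := hlim
  haveI := hTfin
  have hFo : AutOligomorphic L F := by
    rcases hFalt with hfin | ho
    · haveI := hfin
      intro m
      exact ⟨Set.univ, Set.finite_univ, fun x => ⟨x, trivial, FirstOrder.Language.Equiv.refl L F, rfl⟩⟩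
    · exact ho
  obtain ⟨SF, hSFfin, hSF⟩ := hFo n
  have hfinR : ∀ x : Fin n → (Ub : Type), Finite ↥(rangeSub (L := L) x) :=
    fun x => Set.Finite.to_subtype (Set.finite_range x)
  have hCx : ∀ x : Fin n → (Ub : Type),
      Nonempty ((⟨↥(rangeSub (L := L) x), inferInstance⟩ : Bundled.{0} L.Structure) ↪[L] F) := by
    intro x
    refine (hF.2.1 _ (hfinR x)).mp ?_
    exact hUb.2 _ (hfinR x) ⟨(rangeSub (L := L) x).subtype⟩
  let ex : ∀ x : Fin n → (Ub : Type), ↥(rangeSub (L := L) x) ↪[L] F :=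
    fun x => Classical.choice (hCx x)
  let p : (Fin n → (Ub : Type)) → (Fin n → (F : Type)) :=
    fun x i => ex x ⟨x i, mem_rangeSub x i⟩
  have hrep : ∀ x : Fin n → (Ub : Type), ∃ r, r ∈ SF ∧ ∃ g : F ≃[L] F, ⇑g ∘ r = p x := by
    intro x
    obtain ⟨r, hr, g, hgr⟩ := hSF (p x)
    exact ⟨r, hr, g, hgr⟩
  choose rep hrepS gg hgg using hrep
  let Φ : (Fin n → (Ub : Type)) → (Fin n → (F : Type)) × (Fin n → T) :=
    fun x => (rep x, fun i => u (x i))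
  have hΦfin : (Set.range Φ).Finite := by
    apply Set.Finite.subset (hSFfin.prod (Set.finite_univ (α := Fin n → T)))
    rintro _ ⟨x, rfl⟩
    exact Set.mem_prod.mpr ⟨hrepS x, trivial⟩
  have hsec : ∀ c : (Fin n → (F : Type)) × (Fin n → T), ∃ z, c ∈ Set.range Φ → Φ z = c := by
    intro c
    by_cases h : c ∈ Set.range Φ
    · obtain ⟨z, hz⟩ := h
      exact ⟨z, fun _ => hz⟩
    · exact ⟨Classical.arbitrary _, fun h' => absurd h' h⟩
  choose σ hσ using hsec
  refine ⟨σ '' Set.range Φ, hΦfin.image σ, fun x => ?_⟩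
  refine ⟨σ (Φ x), ⟨Φ x, ⟨x, rfl⟩, rfl⟩, ?_⟩
  set z := σ (Φ x) with hzdef
  have hΦz : Φ z = Φ x := hσ (Φ x) ⟨x, rfl⟩
  have hrepzx : rep z = rep x := congrArg Prod.fst hΦz
  have hcz : ∀ i, u (z i) = u (x i) := fun i => congrFun (congrArg Prod.snd hΦz) i
  have hg' : ∀ i, ((gg x).comp (gg z).symm) (ex z ⟨z i, mem_rangeSub z i⟩) =
      ex x ⟨x i, mem_rangeSub x i⟩ := by
    intro i
    have h1 : p z i = gg z (rep z i) := (congrFun (hgg z) i).symm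
    have h2 : gg x (rep x i) = p x i := congrFun (hgg x) i
    show ((gg x).comp (gg z).symm) (p z i) = p x i
    rw [h1, FirstOrder.Language.Equiv.comp_apply, FirstOrder.Language.Equiv.symm_apply_apply, hrepzx, h2]
  obtain ⟨f, hf1, hf2⟩ := key hUb hhom (ex z) (ex x) ((gg x).comp (gg z).symm) hg' hcz
  exact ⟨f, hf1, funext fun i => hf2 i⟩

end Stmt8
end

section
/- Let (U,u) be a universal homogeneous T-colored structure in 𝒞̄. Then (U,u) is w-homogeneous: for every finite T-colored structure (A,a) in 𝒞̄ and all weak embeddings (f₁,g₁), (f₂,g₂) : (A,a) ↪ (U,u) there is a weak automorphism (f,g) of (U,u) with f ∘ f₁ = f₂ and g ∘ g₁ = g₂. Moreover, any two countable T-colored structures in 𝒞̄ that are universal and w-homogeneous are isomorphic. -/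
open FirstOrder Language CategoryTheory

universe u v

namespace Stmt9

variable {L : FirstOrder.Language.{u, v}}

/-- The age of `M` is contained in the class `C` of finite structures. -/
def AgeIn (C : Set (Bundled.{0} L.Structure)) (M : Type*) [L.Structure M] : Prop :=
  ∀ A : Bundled.{0} L.Structure, Finite A → Nonempty (A ↪[L] M) → A ∈ C

/-- `A` is a countable structure whose age is contained in `C`, i.e. `A ∈ C̄`. -/
def InBar (C : Set (Bundled.{0} L.Structure)) (A : Bundled.{0} L.Structure) : Prop :=
  Countable A ∧ AgeIn C A

/-- A Fraïssé class of finite structures: nonempty, isomorphism-closed, countably many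
isomorphism types, hereditary, with the joint embedding and amalgamation properties. -/
structure IsFraisseClass (C : Set (Bundled.{0} L.Structure)) : Prop where
  nonempty : C.Nonempty
  finite : ∀ A ∈ C, Finite A
  isoInvariant : ∀ A B : Bundled.{0} L.Structure, Nonempty (A ≃[L] B) → (A ∈ C ↔ B ∈ C)
  countableTypes : ∃ S : Set (Bundled.{0} L.Structure), S.Countable ∧
    ∀ A ∈ C, ∃ B ∈ S, Nonempty (A ≃[L] B)
  hereditary : ∀ A ∈ C, ∀ B : Bundled.{0} L.Structure, Finite B → Nonempty (B ↪[L] A) → B ∈ C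
  jep : ∀ A ∈ C, ∀ B ∈ C, ∃ D ∈ C, Nonempty (A ↪[L] D) ∧ Nonempty (B ↪[L] D)
  amalgamation : ∀ A B₁ B₂ : Bundled.{0} L.Structure, A ∈ C → B₁ ∈ C → B₂ ∈ C →
    ∀ (f₁ : A ↪[L] B₁) (f₂ : A ↪[L] B₂),
      ∃ (D : Bundled.{0} L.Structure) (_ : D ∈ C) (g₁ : B₁ ↪[L] D) (g₂ : B₂ ↪[L] D),
        ∀ x, g₁ (f₁ x) = g₂ (f₂ x)

/-- `(P, g₁, g₂)` is a pushout of the pair of embeddings `(f₁, f₂)` in the category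
`(K̄, →)` of countable structures with age contained in `K`, with homomorphisms. -/
def IsPushoutIn (K : Set (Bundled.{0} L.Structure)) {A B₁ B₂ : Bundled.{0} L.Structure}
    (f₁ : A ↪[L] B₁) (f₂ : A ↪[L] B₂) (P : Bundled.{0} L.Structure)
    (g₁ : B₁ →[L] P) (g₂ : B₂ →[L] P) : Prop :=
  InBar K P ∧ (∀ x, g₁ (f₁ x) = g₂ (f₂ x)) ∧
  ∀ D : Bundled.{0} L.Structure, InBar K D →
    ∀ (h₁ : B₁ →[L] D) (h₂ : B₂ →[L] D), (∀ x, h₁ (f₁ x) = h₂ (f₂ x)) →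
      ∃! h : P →[L] D, h.comp g₁ = h₁ ∧ h.comp g₂ = h₂

/-- `(P, g₁, g₂)` is a coproduct of `B₁, B₂` in the category `(K̄, →)`. -/
def IsCoproductIn (K : Set (Bundled.{0} L.Structure)) (B₁ B₂ P : Bundled.{0} L.Structure)
    (g₁ : B₁ →[L] P) (g₂ : B₂ →[L] P) : Prop :=
  InBar K P ∧
  ∀ D : Bundled.{0} L.Structure, InBar K D → ∀ (h₁ : B₁ →[L] D) (h₂ : B₂ →[L] D),
    ∃! h : P →[L] D, h.comp g₁ = h₁ ∧ h.comp g₂ = h₂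

/-- A strict Fraïssé class: a Fraïssé class in which every pair of embeddings with common
domain has a pushout in `(K̄,→)`, and every pair of members has a coproduct in `(K̄,→)`. -/
def IsStrictFraisse (K : Set (Bundled.{0} L.Structure)) : Prop :=
  IsFraisseClass K ∧
  (∀ A B₁ B₂ : Bundled.{0} L.Structure, A ∈ K → B₁ ∈ K → B₂ ∈ K →
    ∀ (f₁ : A ↪[L] B₁) (f₂ : A ↪[L] B₂),
      ∃ (P : Bundled.{0} L.Structure) (g₁ : B₁ →[L] P) (g₂ : B₂ →[L] P),
        IsPushoutIn K f₁ f₂ P g₁ g₂) ∧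
  (∀ B₁ B₂ : Bundled.{0} L.Structure, B₁ ∈ K → B₂ ∈ K →
    ∃ (P : Bundled.{0} L.Structure) (g₁ : B₁ →[L] P) (g₂ : B₂ →[L] P),
      IsCoproductIn K B₁ B₂ P g₁ g₂)

/-- `C` is free in the strict Fraïssé class `K`: `C ⊆ K` and `C` is closed under the
canonical (pushout) amalgams and under finite coproducts taken in `(K̄,→)`. -/
def IsFreeIn (C K : Set (Bundled.{0} L.Structure)) : Prop :=
  C ⊆ K ∧
  (∀ A B₁ B₂ : Bundled.{0} L.Structure, A ∈ C → B₁ ∈ C → B₂ ∈ C →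
    ∀ (f₁ : A ↪[L] B₁) (f₂ : A ↪[L] B₂) (P : Bundled.{0} L.Structure)
      (g₁ : B₁ →[L] P) (g₂ : B₂ →[L] P), IsPushoutIn K f₁ f₂ P g₁ g₂ → P ∈ C) ∧
  (∀ B₁ B₂ : Bundled.{0} L.Structure, B₁ ∈ C → B₂ ∈ C →
    ∀ (P : Bundled.{0} L.Structure) (g₁ : B₁ →[L] P) (g₂ : B₂ →[L] P),
      IsCoproductIn K B₁ B₂ P g₁ g₂ → P ∈ C)

/-- `(U,u)` is a universal `T`-colored structure in `C̄`: every countable `T`-colored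
structure `(A,a)` in `C̄` admits an embedding `ι : A ↪ U` with `u ∘ ι = a`. -/
def ColUniversal (C : Set (Bundled.{0} L.Structure)) {T : Type*} [L.Structure T]
    (Ub : Bundled.{0} L.Structure) (u : Ub →[L] T) : Prop :=
  ∀ (A : Bundled.{0} L.Structure) (a : A →[L] T), InBar C A →
    ∃ ι : A ↪[L] Ub, ∀ x, u (ι x) = a x

/-- `(U,u)` is a homogeneous `T`-colored structure in `C̄`: any two embeddings of a finite
`T`-colored structure `(A,a)` of `C̄` into `(U,u)` differ by an automorphism of `(U,u)`. -/
def ColHomogeneous (C : Set (Bundled.{0} L.Structure)) {T : Type*} [L.Structure T]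
    (Ub : Bundled.{0} L.Structure) (u : Ub →[L] T) : Prop :=
  ∀ (A : Bundled.{0} L.Structure) (a : A →[L] T), InBar C A → Finite A →
    ∀ ι₁ ι₂ : A ↪[L] Ub, (∀ x, u (ι₁ x) = a x) → (∀ x, u (ι₂ x) = a x) →
      ∃ f : Ub ≃[L] Ub, (∀ y, u (f y) = u y) ∧ ∀ x, f (ι₁ x) = ι₂ x

/-- `(U,u)` is w-homogeneous: any two weak embeddings of a finite `T`-colored structure
`(A,a)` of `𝒞̄` into `(U,u)` differ by a weak automorphism of `(U,u)`. -/
def ColWHomogeneous (C : Set (Bundled.{0} L.Structure)) {T : Type*} [L.Structure T]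
    (Ub : Bundled.{0} L.Structure) (u : Ub →[L] T) : Prop :=
  ∀ (A : Bundled.{0} L.Structure) (a : A →[L] T), InBar C A → Finite A →
    ∀ (f₁ f₂ : A ↪[L] Ub) (g₁ g₂ : T ≃[L] T),
      (∀ x, u (f₁ x) = g₁ (a x)) → (∀ x, u (f₂ x) = g₂ (a x)) →
      ∃ (f : Ub ≃[L] Ub) (g : T ≃[L] T), (∀ y, u (f y) = g (u y)) ∧
        (∀ x, f (f₁ x) = f₂ x) ∧ ∀ t, g (g₁ t) = g₂ t

/-! ### Auxiliary machinery -/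

section Aux

variable {L : FirstOrder.Language.{u, v}}

/-- The relational language with one unary predicate per color `t : T`. -/
def Lc (T : Type) : FirstOrder.Language.{u, v} where
  Functions _ := PEmpty
  Relations n := match n with
    | 1 => ULift.{v} T
    | _ => PEmpty

instance (T : Type) : (Lc.{u, v} T).IsRelational :=
  fun _ => inferInstanceAs (IsEmpty PEmpty)

/-- Type synonym recording a coloring `c : M → T`. -/
def Col {T M : Type} (_c : M → T) : Type := M

/-- Put an element of `M` into `Col c`. -/
def Col.mk {T M : Type} (c : M → T) (x : M) : Col c := x

/-- Recover the element of `M` from `Col c`. -/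
def Col.un {T M : Type} {c : M → T} (x : Col c) : M := x

instance instColL {T M : Type} [i : L.Structure M] (c : M → T) : L.Structure (Col c) := i

instance instColLc {T M : Type} (c : M → T) : (Lc.{u, v} T).Structure (Col c) where
  funMap := fun F => PEmpty.elim F
  RelMap := fun {n} r x =>
    match n, r, x with
    | 1, t, x => c (x 0).un = t.down

/-- Lift an embedding commuting with the colorings to an embedding for the
expanded language. -/
def colEmbed {T M N : Type} [L.Structure M] [L.Structure N] [L.IsRelational]
    {cM : M → T} {cN : N → T} (f : M ↪[L] N) (h : ∀ x, cN (f x) = cM x) :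
    Col cM ↪[L.sum (Lc T)] Col cN where
  toFun := fun x => Col.mk cN (f x.un)
  inj' := fun a b hab => f.injective hab
  map_fun' := fun {n} F => isEmptyElim F
  map_rel' := fun {n} r x => by
    cases r with
    | inl r => exact f.map_rel' r x
    | inr r =>
      match n, r with
      | 1, t =>
        show (cN (f (x 0).un) = t.down) ↔ (cM (x 0).un = t.down)
        rw [h]

/-- Recover from an equivalence in the expanded language an `L`-equivalence. -/
def uncolEquiv {T M N : Type} [L.Structure M] [L.Structure N] [L.IsRelational]
    {cM : M → T} {cN : N → T} (f : Col cM ≃[L.sum (Lc T)] Col cN) : M ≃[L] N where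
  toEquiv := f.toEquiv
  map_fun' := fun {n} F => isEmptyElim F
  map_rel' := fun {n} r x => f.map_rel' (Sum.inl r) x

theorem uncolEquiv_color {T M N : Type} [L.Structure M] [L.Structure N] [L.IsRelational]
    {cM : M → T} {cN : N → T} (f : Col cM ≃[L.sum (Lc T)] Col cN) (x : M) :
    cN (uncolEquiv f x) = cM x := by
  have := f.map_rel' (n := 1) (Sum.inr (ULift.up (cM x))) ![Col.mk cM x]
  exact this.mpr rfl

/-- In a relational language, every set is (the carrier of) a substructure. -/
def setSub {M : Type*} [L.Structure M] [L.IsRelational] (s : Set M) : L.Substructure M :=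
  ⟨s, fun {n} F => isEmptyElim F⟩

/-- Substructures (on arbitrary subsets) of a structure of `C̄` are again in `C̄`. -/
theorem inBar_setSub {C : Set (Bundled.{0} L.Structure)} [L.IsRelational]
    {V : Bundled.{0} L.Structure} (hV : InBar C V) (s : Set V) :
    InBar C (Bundled.of ↥(setSub (L := L) s)) := by
  haveI : Countable ↥V := hV.1
  refine ⟨inferInstanceAs (Countable (Subtype _)), fun A' hfin ⟨e⟩ => hV.2 A' hfin ⟨?_⟩⟩
  exact (setSub (L := L) s).subtype.comp e

/-- The one-point extension property of a colored structure. -/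
def ExtProp (C : Set (Bundled.{0} L.Structure)) {T : Type} [L.Structure T]
    (V : Bundled.{0} L.Structure) (v : V →[L] T) : Prop :=
  ∀ (A B : Bundled.{0} L.Structure) (a : A →[L] T) (b : B →[L] T),
    Finite B → InBar C A → InBar C B →
    ∀ ι : A ↪[L] B, (∀ x, b (ι x) = a x) → ∀ f : A ↪[L] V, (∀ x, v (f x) = a x) →
      ∃ g : B ↪[L] V, (∀ x, v (g x) = b x) ∧ ∀ x, g (ι x) = f x

theorem extProp_of_hom {C : Set (Bundled.{0} L.Structure)} {T : Type} [L.Structure T]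
    {Ub : Bundled.{0} L.Structure} {u : Ub →[L] T}
    (huniv : ColUniversal C Ub u) (hhom : ColHomogeneous C Ub u) :
    ExtProp C Ub u := by
  intro A B a b hBfin hA hB ι hι f hf
  obtain ⟨κ, hκ⟩ := huniv B b hB
  have hAfin : Finite A := Finite.of_injective ι ι.injective
  obtain ⟨h, hhcol, hhι⟩ := hhom A a hA hAfin (κ.comp ι) f
    (fun x => by rw [Embedding.comp_apply, hκ, hι]) hf
  refine ⟨h.toEmbedding.comp κ, fun x => ?_, fun x => ?_⟩
  · show u (h (κ x)) = b x
    rw [hhcol, hκ]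
  · show h (κ (ι x)) = f x
    exact hhι x

theorem extProp_of_whom {C : Set (Bundled.{0} L.Structure)} {T : Type} [L.Structure T]
    {Ub : Bundled.{0} L.Structure} {u : Ub →[L] T}
    (huniv : ColUniversal C Ub u) (hw : ColWHomogeneous C Ub u) :
    ExtProp C Ub u := by
  intro A B a b hBfin hA hB ι hι f hf
  obtain ⟨κ, hκ⟩ := huniv B b hB
  have hAfin : Finite A := Finite.of_injective ι ι.injective
  obtain ⟨h, g, hhcol, hhι, hg⟩ := hw A a hA hAfin (κ.comp ι) f
    (Language.Equiv.refl L T) (Language.Equiv.refl L T)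
    (fun x => by rw [Embedding.comp_apply, hκ, hι]; rfl)
    (fun x => by rw [hf]; rfl)
  have hgid : ∀ t, g t = t := fun t => hg t
  refine ⟨h.toEmbedding.comp κ, fun x => ?_, fun x => ?_⟩
  · show u (h (κ x)) = b x
    rw [hhcol, hgid, hκ]
  · show h (κ (ι x)) = f x
    exact hhι x

theorem extProp_twist {C : Set (Bundled.{0} L.Structure)} {T : Type} [L.Structure T]
    {V : Bundled.{0} L.Structure} {v : V →[L] T} (hv : ExtProp C V v) (g : T ≃[L] T) :
    ExtProp C V (g.toHom.comp v) := by
  intro A B a b hBfin hA hB ι hι f hf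
  obtain ⟨g', hg'col, hg'ι⟩ := hv A B (g.symm.toHom.comp a) (g.symm.toHom.comp b)
    hBfin hA hB ι (fun x => by simp only [Hom.comp_apply]; rw [hι]) f
    (fun x => by
      simp only [Hom.comp_apply]
      have := hf x
      simp only [Hom.comp_apply] at this
      rw [← this]
      simp [Equiv.toHom])
  refine ⟨g', fun x => ?_, hg'ι⟩
  have := hg'col x
  simp only [Hom.comp_apply] at this ⊢
  rw [this]
  simp [Equiv.toHom]

/-- The extension property yields an extension pair in the expanded language. -/
theorem isExtensionPair_of_extProp {C : Set (Bundled.{0} L.Structure)} {T : Type}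
    [L.Structure T] [L.IsRelational]
    {V₁ V₂ : Bundled.{0} L.Structure} {v₁ : V₁ →[L] T} {v₂ : V₂ →[L] T}
    (h₁ : InBar C V₁) (h₂ : InBar C V₂) (e₂ : ExtProp C V₂ v₂) :
    (L.sum (Lc T)).IsExtensionPair (Col (⇑v₁)) (Col (⇑v₂)) := by
  rw [isExtensionPair_iff_exists_embedding_closure_singleton_sup]
  intro S S_FG f m
  set L' := L.sum (Lc T)
  set S' : L'.Substructure (Col (⇑v₁)) := Substructure.closure L' {m} ⊔ S with hS'
  have S'_FG : S'.FG := (Substructure.fg_closure_singleton m).sup S_FG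
  have S'_fin : Finite S' := S'_FG.finite
  -- set up the bundled `L`-structures
  set sA : Set ↥V₁ := (S : Set (Col (⇑v₁))) with hsA
  set sB : Set ↥V₁ := (S' : Set (Col (⇑v₁))) with hsB
  have hAB : sA ⊆ sB := fun x hx => (le_sup_right : S ≤ S') hx
  set A : Bundled.{0} L.Structure := Bundled.of ↥(setSub (L := L) sA) with hA
  set B : Bundled.{0} L.Structure := Bundled.of ↥(setSub (L := L) sB) with hB
  have hBfin : Finite B := S'_fin
  set a : A →[L] T := v₁.comp (setSub (L := L) sA).subtype.toHom with ha
  set b : B →[L] T := v₁.comp (setSub (L := L) sB).subtype.toHom with hb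
  have hsub : setSub (L := L) sA ≤ setSub (L := L) sB := hAB
  set ι : A ↪[L] B := Substructure.inclusion hsub with hiota
  -- the embedding `f` as an `L`-embedding
  set fL : A ↪[L] V₂ :=
    { toFun := fun x => (f ⟨x.1, x.2⟩ : Col (⇑v₂))
      inj' := fun x y hxy => Subtype.ext (congrArg Subtype.val (f.injective hxy))
      map_fun' := fun {n} F => isEmptyElim F
      map_rel' := fun {n} r x => f.map_rel' (Sum.inl r) (fun i => ⟨(x i).1, (x i).2⟩) }
    with hfL
  have hfLcol : ∀ x, v₂ (fL x) = a x := by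
    intro x
    have := f.map_rel' (n := 1) (Sum.inr (ULift.up (v₁ x.1))) ![⟨x.1, x.2⟩]
    exact this.mpr rfl
  obtain ⟨g, hgcol, hgι⟩ := e₂ A B a b hBfin (inBar_setSub h₁ sA) (inBar_setSub h₁ sB)
    ι (fun x => rfl) fL hfLcol
  refine ⟨{ toFun := fun x => (g ⟨x.1, x.2⟩ : Col (⇑v₂))
            inj' := fun x y hxy => Subtype.ext (congrArg Subtype.val (g.injective hxy))
            map_fun' := fun {n} F => isEmptyElim F
            map_rel' := fun {n} r x => ?_ }, ?_⟩
  · cases r with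
    | inl r => exact g.map_rel' r (fun i => ⟨(x i).1, (x i).2⟩)
    | inr r =>
      match n, r with
      | 1, t =>
        show (v₂ (g ⟨(x 0).1, (x 0).2⟩) = t.down) ↔ (v₁ (x 0).1 = t.down)
        exact iff_of_eq (congrArg (fun s => s = t.down) (hgcol ⟨(x 0).1, (x 0).2⟩))
  · apply Embedding.ext
    intro x
    exact (hgι ⟨x.1, x.2⟩).symm

/-- Back and forth: two countable colored structures with the extension property are
isomorphic over any common finite colored substructure. -/
theorem keyIso {C : Set (Bundled.{0} L.Structure)} {T : Type} [L.Structure T] [L.IsRelational]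
    {V₁ V₂ : Bundled.{0} L.Structure} {v₁ : V₁ →[L] T} {v₂ : V₂ →[L] T}
    (h₁ : InBar C V₁) (h₂ : InBar C V₂) (e₁ : ExtProp C V₁ v₁) (e₂ : ExtProp C V₂ v₂)
    (A : Bundled.{0} L.Structure) (a : A →[L] T) (hAfin : Finite A)
    (p₁ : A ↪[L] V₁) (p₂ : A ↪[L] V₂)
    (hp₁ : ∀ x, v₁ (p₁ x) = a x) (hp₂ : ∀ x, v₂ (p₂ x) = a x) :
    ∃ j : V₁ ≃[L] V₂, (∀ x, v₂ (j x) = v₁ x) ∧ ∀ x, j (p₁ x) = p₂ x := by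
  set L' := L.sum (Lc.{u, v} T) with hL'
  set p₁' : Col (⇑a) ↪[L'] Col (⇑v₁) := colEmbed p₁ hp₁ with hp₁'
  set p₂' : Col (⇑a) ↪[L'] Col (⇑v₂) := colEmbed p₂ hp₂ with hp₂'
  haveI : Finite (Col (⇑a)) := hAfin
  have hfg : p₁'.toHom.range.FG := by
    rw [Substructure.fg_iff_finite]
    exact Finite.of_equiv _ p₁'.equivRange.toEquiv
  set seed : L'.FGEquiv (Col (⇑v₁)) (Col (⇑v₂)) :=
    ⟨⟨p₁'.toHom.range, p₂'.toHom.range, p₂'.equivRange.comp p₁'.equivRange.symm⟩, hfg⟩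
    with hseed
  haveI : Countable (Col (⇑v₁)) := h₁.1
  haveI : Countable (Col (⇑v₂)) := h₂.1
  have cg₁ : Structure.CG L' (Col (⇑v₁)) := Structure.cg_def.2 Substructure.cg_of_countable
  have cg₂ : Structure.CG L' (Col (⇑v₂)) := Structure.cg_def.2 Substructure.cg_of_countable
  obtain ⟨F, hF⟩ := equiv_between_cg cg₁ cg₂ seed
    (isExtensionPair_of_extProp h₁ h₂ e₂) (isExtensionPair_of_extProp h₂ h₁ e₁)
  obtain ⟨hdom, hcod, heq⟩ := PartialEquiv.le_iff.1 hF
  refine ⟨uncolEquiv F, uncolEquiv_color F, fun y => ?_⟩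
  have mem₁ : p₁' y ∈ p₁'.toHom.range := Hom.mem_range.2 ⟨y, rfl⟩
  have mem₂ : p₂' y ∈ p₂'.toHom.range := Hom.mem_range.2 ⟨y, rfl⟩
  have e1 : p₁'.equivRange y = ⟨p₁' y, mem₁⟩ :=
    Subtype.ext (Embedding.equivRange_apply p₁' y)
  have h1 : seed.1.toEquiv ⟨p₁' y, mem₁⟩ = ⟨p₂' y, mem₂⟩ := by
    show p₂'.equivRange (p₁'.equivRange.symm ⟨p₁' y, mem₁⟩) = _
    rw [← e1]
    exact (congrArg p₂'.equivRange (p₁'.equivRange.symm_apply_apply y)).trans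
      (Subtype.ext (Embedding.equivRange_apply p₂' y))
  have key := congrArg Subtype.val (heq ⟨p₁' y, mem₁⟩)
  rw [h1] at key
  exact key.symm

end Aux

/-- Every universal homogeneous `T`-colored structure in `𝒞̄` is
w-homogeneous, and any two countable universal w-homogeneous `T`-colored structures in
`𝒞̄` are isomorphic. -/
theorem universal_homogeneous_wHomogeneous (L : FirstOrder.Language.{u, v}) [L.IsRelational]
    (U C : Set (Bundled.{0} L.Structure))
    (hU : IsStrictFraisse U) (hC : IsFraisseClass C) (hfree : IsFreeIn C U)
    (T : Type) [L.Structure T] [Countable T] (hT : AgeIn U T)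
    (Ub : Bundled.{0} L.Structure) (u : Ub →[L] T) (hUb : InBar C Ub)
    (huniv : ColUniversal C Ub u) (hhom : ColHomogeneous C Ub u) :
    ColWHomogeneous C Ub u ∧
    ∀ (U₁ : Bundled.{0} L.Structure) (u₁ : U₁ →[L] T)
      (U₂ : Bundled.{0} L.Structure) (u₂ : U₂ →[L] T),
      InBar C U₁ → ColUniversal C U₁ u₁ → ColWHomogeneous C U₁ u₁ →
      InBar C U₂ → ColUniversal C U₂ u₂ → ColWHomogeneous C U₂ u₂ →
      ∃ j : U₁ ≃[L] U₂, ∀ x, u₂ (j x) = u₁ x := by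
  constructor
  · intro A a hA hAfin f₁ f₂ g₁ g₂ hf₁ hf₂
    set g : T ≃[L] T := g₂.comp g₁.symm with hg
    have e_base : ExtProp C Ub u := extProp_of_hom huniv hhom
    have e₁ : ExtProp C Ub (g.toHom.comp u) := extProp_twist e_base g
    obtain ⟨j, hjcol, hjp⟩ := keyIso hUb hUb e₁ e_base A (g₂.toHom.comp a) hAfin f₁ f₂
      (fun x => by
        show g (u (f₁ x)) = g₂ (a x)
        rw [hf₁, hg]
        simp only [Language.Equiv.comp_apply, Language.Equiv.symm_apply_apply])
      (fun x => hf₂ x)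
    refine ⟨j, g, fun y => hjcol y, hjp, fun t => ?_⟩
    rw [hg]
    simp only [Language.Equiv.comp_apply, Language.Equiv.symm_apply_apply]
  · intro U₁ u₁ U₂ u₂ h1 hu1 hw1 h2 hu2 hw2
    have e₁ := extProp_of_whom hu1 hw1
    have e₂ := extProp_of_whom hu2 hw2
    set A : Bundled.{0} L.Structure := Bundled.of ↥(setSub (L := L) (∅ : Set ↥U₁)) with hA
    haveI : IsEmpty ↥A := ⟨fun x => x.2⟩
    have hAfin : Finite ↥A := inferInstance
    set a : A →[L] T := u₁.comp (setSub (L := L) (∅ : Set ↥U₁)).subtype.toHom with ha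
    obtain ⟨p₂, hp₂⟩ := hu2 A a (inBar_setSub h1 ∅)
    obtain ⟨j, hjcol, -⟩ := keyIso h1 h2 e₁ e₂ A a hAfin
      (setSub (L := L) (∅ : Set ↥U₁)).subtype p₂ (fun x => rfl) hp₂
    exact ⟨j, hjcol⟩

end Stmt9
end

section
/- Let (U,u) be a universal homogeneous T-colored structure in 𝒞̄. If the Fraïssé limit of 𝒞 is finite or has an oligomorphic automorphism group, and if Aut(T) is oligomorphic, then the color automorphism group cAut(U,u) = { f ∈ Aut(U) : u ∘ f = g ∘ u for some g ∈ Aut(T) } is oligomorphic, i.e. for every n ≥ 1 it has only finitely many orbits on n-tuples of U. -/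
open FirstOrder Language CategoryTheory

universe u v

namespace Stmt10

/-- The automorphism group of `M` is oligomorphic: for every `n` there are only finitely
many orbits on `n`-tuples. -/
def AutOligomorphic (L : FirstOrder.Language.{u, v}) (M : Type*) [L.Structure M] : Prop :=
  ∀ n : ℕ, ∃ S : Set (Fin n → M), S.Finite ∧
    ∀ x : Fin n → M, ∃ y ∈ S, ∃ g : M ≃[L] M, ⇑g ∘ y = x

variable {L : FirstOrder.Language.{u, v}}

/-- The age of `M` is contained in the class `C` of finite structures. -/
def AgeIn (C : Set (Bundled.{0} L.Structure)) (M : Type*) [L.Structure M] : Prop :=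
  ∀ A : Bundled.{0} L.Structure, Finite A → Nonempty (A ↪[L] M) → A ∈ C

/-- `A` is a countable structure whose age is contained in `C`, i.e. `A ∈ C̄`. -/
def InBar (C : Set (Bundled.{0} L.Structure)) (A : Bundled.{0} L.Structure) : Prop :=
  Countable A ∧ AgeIn C A

/-- A Fraïssé class of finite structures: nonempty, isomorphism-closed, countably many
isomorphism types, hereditary, with the joint embedding and amalgamation properties. -/
structure IsFraisseClass (C : Set (Bundled.{0} L.Structure)) : Prop where
  nonempty : C.Nonempty
  finite : ∀ A ∈ C, Finite A
  isoInvariant : ∀ A B : Bundled.{0} L.Structure, Nonempty (A ≃[L] B) → (A ∈ C ↔ B ∈ C)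
  countableTypes : ∃ S : Set (Bundled.{0} L.Structure), S.Countable ∧
    ∀ A ∈ C, ∃ B ∈ S, Nonempty (A ≃[L] B)
  hereditary : ∀ A ∈ C, ∀ B : Bundled.{0} L.Structure, Finite B → Nonempty (B ↪[L] A) → B ∈ C
  jep : ∀ A ∈ C, ∀ B ∈ C, ∃ D ∈ C, Nonempty (A ↪[L] D) ∧ Nonempty (B ↪[L] D)
  amalgamation : ∀ A B₁ B₂ : Bundled.{0} L.Structure, A ∈ C → B₁ ∈ C → B₂ ∈ C →
    ∀ (f₁ : A ↪[L] B₁) (f₂ : A ↪[L] B₂),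
      ∃ (D : Bundled.{0} L.Structure) (_ : D ∈ C) (g₁ : B₁ ↪[L] D) (g₂ : B₂ ↪[L] D),
        ∀ x, g₁ (f₁ x) = g₂ (f₂ x)

/-- `(P, g₁, g₂)` is a pushout of the pair of embeddings `(f₁, f₂)` in the category
`(K̄, →)` of countable structures with age contained in `K`, with homomorphisms. -/
def IsPushoutIn (K : Set (Bundled.{0} L.Structure)) {A B₁ B₂ : Bundled.{0} L.Structure}
    (f₁ : A ↪[L] B₁) (f₂ : A ↪[L] B₂) (P : Bundled.{0} L.Structure)
    (g₁ : B₁ →[L] P) (g₂ : B₂ →[L] P) : Prop :=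
  InBar K P ∧ (∀ x, g₁ (f₁ x) = g₂ (f₂ x)) ∧
  ∀ D : Bundled.{0} L.Structure, InBar K D →
    ∀ (h₁ : B₁ →[L] D) (h₂ : B₂ →[L] D), (∀ x, h₁ (f₁ x) = h₂ (f₂ x)) →
      ∃! h : P →[L] D, h.comp g₁ = h₁ ∧ h.comp g₂ = h₂

/-- `(P, g₁, g₂)` is a coproduct of `B₁, B₂` in the category `(K̄, →)`. -/
def IsCoproductIn (K : Set (Bundled.{0} L.Structure)) (B₁ B₂ P : Bundled.{0} L.Structure)
    (g₁ : B₁ →[L] P) (g₂ : B₂ →[L] P) : Prop :=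
  InBar K P ∧
  ∀ D : Bundled.{0} L.Structure, InBar K D → ∀ (h₁ : B₁ →[L] D) (h₂ : B₂ →[L] D),
    ∃! h : P →[L] D, h.comp g₁ = h₁ ∧ h.comp g₂ = h₂

/-- A strict Fraïssé class: a Fraïssé class in which every pair of embeddings with common
domain has a pushout in `(K̄,→)`, and every pair of members has a coproduct in `(K̄,→)`. -/
def IsStrictFraisse (K : Set (Bundled.{0} L.Structure)) : Prop :=
  IsFraisseClass K ∧
  (∀ A B₁ B₂ : Bundled.{0} L.Structure, A ∈ K → B₁ ∈ K → B₂ ∈ K →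
    ∀ (f₁ : A ↪[L] B₁) (f₂ : A ↪[L] B₂),
      ∃ (P : Bundled.{0} L.Structure) (g₁ : B₁ →[L] P) (g₂ : B₂ →[L] P),
        IsPushoutIn K f₁ f₂ P g₁ g₂) ∧
  (∀ B₁ B₂ : Bundled.{0} L.Structure, B₁ ∈ K → B₂ ∈ K →
    ∃ (P : Bundled.{0} L.Structure) (g₁ : B₁ →[L] P) (g₂ : B₂ →[L] P),
      IsCoproductIn K B₁ B₂ P g₁ g₂)

/-- `C` is free in the strict Fraïssé class `K`: `C ⊆ K` and `C` is closed under the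
canonical (pushout) amalgams and under finite coproducts taken in `(K̄,→)`. -/
def IsFreeIn (C K : Set (Bundled.{0} L.Structure)) : Prop :=
  C ⊆ K ∧
  (∀ A B₁ B₂ : Bundled.{0} L.Structure, A ∈ C → B₁ ∈ C → B₂ ∈ C →
    ∀ (f₁ : A ↪[L] B₁) (f₂ : A ↪[L] B₂) (P : Bundled.{0} L.Structure)
      (g₁ : B₁ →[L] P) (g₂ : B₂ →[L] P), IsPushoutIn K f₁ f₂ P g₁ g₂ → P ∈ C) ∧
  (∀ B₁ B₂ : Bundled.{0} L.Structure, B₁ ∈ C → B₂ ∈ C →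
    ∀ (P : Bundled.{0} L.Structure) (g₁ : B₁ →[L] P) (g₂ : B₂ →[L] P),
      IsCoproductIn K B₁ B₂ P g₁ g₂ → P ∈ C)

/-- `F` is a Fraïssé limit of the class `C`: a countable structure whose age is exactly
`C` and which is ultrahomogeneous. -/
def IsFraisseLimitOf (C : Set (Bundled.{0} L.Structure)) (F : Bundled.{0} L.Structure) : Prop :=
  Countable F ∧
  (∀ A : Bundled.{0} L.Structure, Finite A → (A ∈ C ↔ Nonempty (A ↪[L] F))) ∧
  ∀ A : Bundled.{0} L.Structure, Finite A → ∀ f g : A ↪[L] F,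
    ∃ h : F ≃[L] F, ∀ x, h (f x) = g x

/-- `(U,u)` is a universal `T`-colored structure in `C̄`: every countable `T`-colored
structure `(A,a)` in `C̄` admits an embedding `ι : A ↪ U` with `u ∘ ι = a`. -/
def ColUniversal (C : Set (Bundled.{0} L.Structure)) {T : Type*} [L.Structure T]
    (Ub : Bundled.{0} L.Structure) (u : Ub →[L] T) : Prop :=
  ∀ (A : Bundled.{0} L.Structure) (a : A →[L] T), InBar C A →
    ∃ ι : A ↪[L] Ub, ∀ x, u (ι x) = a x

/-- `(U,u)` is a homogeneous `T`-colored structure in `C̄`: any two embeddings of a finite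
`T`-colored structure `(A,a)` of `C̄` into `(U,u)` differ by an automorphism of `(U,u)`. -/
def ColHomogeneous (C : Set (Bundled.{0} L.Structure)) {T : Type*} [L.Structure T]
    (Ub : Bundled.{0} L.Structure) (u : Ub →[L] T) : Prop :=
  ∀ (A : Bundled.{0} L.Structure) (a : A →[L] T), InBar C A → Finite A →
    ∀ ι₁ ι₂ : A ↪[L] Ub, (∀ x, u (ι₁ x) = a x) → (∀ x, u (ι₂ x) = a x) →
      ∃ f : Ub ≃[L] Ub, (∀ y, u (f y) = u y) ∧ ∀ x, f (ι₁ x) = ι₂ x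


/-! ### Auxiliary machinery for the proof -/

section Aux

/-- unary relation symbols indexed by the colors -/
def cRel (T : Type) : ℕ → Type
  | 1 => T
  | _ => Empty

/-- the language of colorings: one unary relation symbol per color -/
def cLang (T : Type) : FirstOrder.Language := ⟨fun _ => Empty, cRel T⟩

instance (T : Type) : (cLang T).IsRelational := fun _ => inferInstanceAs (IsEmpty Empty)

instance {T : Type} : IsEmpty (cRel T 0) := inferInstanceAs (IsEmpty Empty)
instance {T : Type} (n : ℕ) : IsEmpty (cRel T (n + 2)) := inferInstanceAs (IsEmpty Empty)

/-- a copy of a type, tagged by a coloring -/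
def Copy {α β : Type} (_w : α → β) : Type := α

def Copy.of {α β : Type} (w : α → β) : α → Copy w := id
def Copy.to {α β : Type} (w : α → β) : Copy w → α := id

instance {α β : Type} [I : L.Structure α] (w : α → β) : L.Structure (Copy w) := I

instance instCopyColor {α T : Type} (w : α → T) : (cLang T).Structure (Copy w) where
  funMap {_} f _ := isEmptyElim f
  RelMap {n} r v :=
    match n, r, v with
    | 1, t, v => w (Copy.to w (v 0)) = t

/-- the language `L` together with the color relations -/
abbrev LC (L : FirstOrder.Language.{u, v}) (T : Type) := L.sum (cLang T)

section ColorHelpers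

variable [L.IsRelational] {T : Type} [L.Structure T] {α : Type} [L.Structure α] {w₁ w₂ : α → T}

/-- forget the colors: an `LC`-substructure of `Copy w₁`, seen as a set of `α`. -/
def uset (S : Substructure (LC L T) (Copy w₁)) : Set α :=
  fun z => Copy.of w₁ z ∈ S

lemma mem_uset {S : Substructure (LC L T) (Copy w₁)} {z : α} :
    z ∈ uset S ↔ Copy.of w₁ z ∈ S := Iff.rfl

/-- an element of the closure of `uset S` gives an element of `S`. -/
def toS (S : Substructure (LC L T) (Copy w₁)) (z : ↥(Substructure.closure L (uset S))) : ↥S :=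
  ⟨Copy.of w₁ z.1, by
    have h2 := z.2
    rw [Substructure.mem_closure_iff_of_isRelational] at h2
    exact h2⟩

/-- the underlying `L`-embedding of a colored partial embedding. -/
def jEmb (S : Substructure (LC L T) (Copy w₁)) (j : ↥S ↪[LC L T] Copy w₂) :
    ↥(Substructure.closure L (uset S)) ↪[L] α where
  toFun z := Copy.to w₂ (j (toS S z))
  inj' z z' h := by
    have := j.injective h
    have h2 : (toS S z).1 = (toS S z').1 := congrArg Subtype.val this
    exact Subtype.ext h2
  map_fun' {n} f := isEmptyElim f
  map_rel' {n} r v := j.map_rel' (Sum.inl r) (fun i => toS S (v i))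

lemma jEmb_color (S : Substructure (LC L T) (Copy w₁)) (j : ↥S ↪[LC L T] Copy w₂)
    (z : ↥(Substructure.closure L (uset S))) :
    w₂ (jEmb S j z) = w₁ z.1 :=
  (j.map_rel' (n := 1) (Sum.inr (w₁ z.1 : cRel T 1)) (fun _ => toS S z)).2 rfl

lemma mem_closA {S : Substructure (LC L T) (Copy w₁)} {m : α}
    {z : α} (h : Copy.of w₁ z ∈ Substructure.closure (LC L T) ({Copy.of w₁ m} : Set (Copy w₁)) ⊔ S) :
    z ∈ Substructure.closure L (insert m (uset S)) := by
  have e : Substructure.closure (LC L T) ({Copy.of w₁ m} : Set (Copy w₁)) ⊔ S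
      = Substructure.closure (LC L T) ({Copy.of w₁ m} ∪ (S : Set (Copy w₁))) := by
    rw [Substructure.closure_union, Substructure.closure_eq]
  rw [e, Substructure.mem_closure_iff_of_isRelational] at h
  rw [Substructure.mem_closure_iff_of_isRelational]
  rcases h with h | h
  · exact Or.inl (by exact h)
  · exact Or.inr (by exact h)

/-- the extended colored embedding built from an `L`-embedding `k` on the closure of
`insert m (uset S)` which intertwines the colorings. -/
def gExt (S : Substructure (LC L T) (Copy w₁)) (m : α)
    (k : ↥(Substructure.closure L (insert m (uset S))) ↪[L] α)
    (hk : ∀ z, w₂ (k z) = w₁ z.1) :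
    ↥(Substructure.closure (LC L T) ({Copy.of w₁ m} : Set (Copy w₁)) ⊔ S) ↪[LC L T] Copy w₂ where
  toFun z := Copy.of w₂ (k ⟨Copy.to w₁ z.1, mem_closA z.2⟩)
  inj' z z' h := by
    have h2 := k.injective h
    have h3 := congrArg Subtype.val h2
    exact Subtype.ext h3
  map_fun' {n} f := isEmptyElim f
  map_rel' {n} r v := by
    cases r with
    | inl r => exact k.map_rel' r (fun i => ⟨Copy.to w₁ (v i).1, mem_closA (v i).2⟩)
    | inr t =>
      match n, t, v with
      | 1, t, v =>
        have key := hk ⟨Copy.to w₁ (v 0).1, mem_closA (v 0).2⟩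
        exact iff_of_eq (congrArg (· = t) key)

end ColorHelpers

section MainHelpers

variable [L.IsRelational] {T : Type} [L.Structure T]
variable {C : Set (Bundled.{0} L.Structure)} {Ub : Bundled.{0} L.Structure} {u : Ub →[L] T}

omit [L.IsRelational] in
lemma finite_sub {M : Type} [L.Structure M] {S : L.Substructure M}
    (h : (S : Set M).Finite) : Finite S := h.to_subtype

omit [L.IsRelational] [L.Structure T] in
lemma inBar_sub (hUb : InBar C Ub) (S : L.Substructure Ub) :
    InBar C (Bundled.of (↥S)) := by
  haveI : Countable (↥Ub) := hUb.1
  exact ⟨inferInstanceAs (Countable (↥S)), fun B hB ⟨e⟩ => hUb.2 B hB ⟨S.subtype.comp e⟩⟩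

lemma ext_pair (hUb : InBar C Ub) (huniv : ColUniversal C Ub u) (hhom : ColHomogeneous C Ub u)
    (g₁ g₂ : T ≃[L] T) (w₁ w₂ : (↥Ub) → T)
    (hw₁ : ∀ z, w₁ z = g₁ (u z)) (hw₂ : ∀ z, w₂ z = g₂ (u z)) :
    (LC L T).IsExtensionPair (Copy w₁) (Copy w₂) := by
  rw [isExtensionPair_iff_exists_embedding_closure_singleton_sup]
  intro S S_FG j m
  haveI : Countable (↥Ub) := hUb.1
  have husfin : (uset (w₁ := w₁) S).Finite := by
    obtain ⟨t, ht⟩ := S_FG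
    refine ((t.finite_toSet).image (Copy.to w₁)).subset ?_
    intro z hz
    rw [mem_uset, ← ht, Substructure.mem_closure_iff_of_isRelational] at hz
    exact ⟨Copy.of w₁ z, hz, rfl⟩
  have hSAfin : ((Substructure.closure L (insert (Copy.to w₁ m) (uset (w₁ := w₁) S)) : L.Substructure Ub) : Set (↥Ub)).Finite := by
    rw [Substructure.closure_eq_of_isRelational]
    exact husfin.insert _
  have hS₀fin : ((Substructure.closure L (uset (w₁ := w₁) S) : L.Substructure Ub) : Set (↥Ub)).Finite := by
    rw [Substructure.closure_eq_of_isRelational]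
    exact husfin
  haveI hfinSA := finite_sub hSAfin
  haveI hfinS₀ := finite_sub hS₀fin
  have h₀A : (Substructure.closure L (uset (w₁ := w₁) S) : L.Substructure Ub)
      ≤ Substructure.closure L (insert (Copy.to w₁ m) (uset (w₁ := w₁) S)) :=
    Substructure.closure_mono (Set.subset_insert _ _)
  set γ : T →[L] T := g₂.symm.toHom.comp g₁.toHom with hγdef
  have hγ : ∀ t : T, γ t = g₂.symm (g₁ t) := fun t => rfl
  obtain ⟨ι, hι⟩ := huniv (Bundled.of (↥(Substructure.closure L (insert (Copy.to w₁ m) (uset (w₁ := w₁) S)))))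
    (γ.comp (u.comp (Substructure.closure L (insert (Copy.to w₁ m) (uset (w₁ := w₁) S))).subtype.toHom))
    (inBar_sub hUb _)
  have hj : ∀ z, u (jEmb S j z) = γ (u z.1) := by
    intro z
    have hcol := jEmb_color S j z
    rw [hw₂, hw₁] at hcol
    have h2 := congrArg g₂.symm hcol
    rw [g₂.symm_apply_apply] at h2
    rw [h2, hγ]
  obtain ⟨h, hcolh, hcomm⟩ := hhom (Bundled.of (↥(Substructure.closure L (uset (w₁ := w₁) S))))
    (γ.comp (u.comp (Substructure.closure L (uset (w₁ := w₁) S)).subtype.toHom))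
    (inBar_sub hUb _) hfinS₀
    (ι.comp (Substructure.inclusion h₀A)) (jEmb S j)
    (fun z => hι (Substructure.inclusion h₀A z)) hj
  have hk : ∀ z, w₂ ((h.toEmbedding.comp ι) z) = w₁ z.1 := by
    intro z
    rw [hw₂, hw₁]
    show g₂ (u (h (ι z))) = g₁ (u z.1)
    rw [hcolh, hι]
    show g₂ (γ (u z.1)) = g₁ (u z.1)
    rw [hγ, g₂.apply_symm_apply]
  refine ⟨gExt S (Copy.to w₁ m) (h.toEmbedding.comp ι) hk, ?_⟩
  apply Embedding.ext
  intro z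
  exact (hcomm ⟨Copy.to w₁ z.1, Substructure.subset_closure z.2⟩).symm

omit [L.Structure T] in
lemma bot_isEmpty {L' : FirstOrder.Language} [L'.IsRelational] (M : Type*) [L'.Structure M] :
    IsEmpty (↥(⊥ : L'.Substructure M)) := by
  constructor
  rintro ⟨x, hx⟩
  rw [← Substructure.closure_empty, Substructure.mem_closure_iff_of_isRelational] at hx
  exact hx

/-- the bottom `FGEquiv` between two copies of the same structure. -/
noncomputable def botFGEquiv (w₁ w₂ : (↥Ub) → T) :
    (LC L T).FGEquiv (Copy w₁) (Copy w₂) := by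
  haveI h1 := bot_isEmpty (L' := LC L T) (Copy w₁)
  haveI h2 := bot_isEmpty (L' := LC L T) (Copy w₂)
  refine ⟨⟨⊥, ⊥, ⟨Equiv.equivOfIsEmpty _ _, fun {n} f => isEmptyElim f, fun {n} r v => ?_⟩⟩,
    Substructure.fg_bot⟩
  cases n with
  | zero =>
    cases r with
    | inl r =>
      have e : (fun i : Fin 0 => (Copy.to w₂ ((((Equiv.equivOfIsEmpty (↥(⊥ : (LC L T).Substructure (Copy w₁)))
            (↥(⊥ : (LC L T).Substructure (Copy w₂)))) ∘ v) i : Copy w₂))))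
          = (fun i : Fin 0 => Copy.to w₁ ((v i : Copy w₁))) :=
        funext (fun i => i.elim0)
      exact iff_of_eq (congrArg (@Structure.RelMap L (↥Ub) _ 0 r) e)
    | inr r => exact Empty.elim r
  | succ k => exact isEmptyElim (v 0)

/-- every automorphism of the color structure lifts to a color automorphism of `Ub`. -/
lemma lift_aut (hUb : InBar C Ub) (huniv : ColUniversal C Ub u) (hhom : ColHomogeneous C Ub u)
    (g : T ≃[L] T) : ∃ f : Ub ≃[L] Ub, ∀ z, u (f z) = g (u z) := by
  haveI : Countable (↥Ub) := hUb.1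
  haveI : Countable (Copy (fun z : ↥Ub => u z)) := ‹Countable (↥Ub)›
  haveI : Countable (Copy (fun z : ↥Ub => g.symm (u z))) := ‹Countable (↥Ub)›
  obtain ⟨f', -⟩ := equiv_between_cg (L := LC L T)
    (M := Copy (fun z : ↥Ub => u z)) (N := Copy (fun z : ↥Ub => g.symm (u z)))
    (Structure.cg_of_countable) (Structure.cg_of_countable)
    (botFGEquiv (Ub := Ub) _ _)
    (ext_pair hUb huniv hhom (FirstOrder.Language.Equiv.refl L T) g.symm _ _ (fun _ => rfl) (fun _ => rfl))
    (ext_pair hUb huniv hhom g.symm (FirstOrder.Language.Equiv.refl L T) _ _ (fun _ => rfl) (fun _ => rfl))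
  refine ⟨⟨⟨fun z => Copy.to _ (f' (Copy.of (fun z : ↥Ub => u z) z)),
      fun z => Copy.to _ (f'.toEquiv.symm (Copy.of (fun z : ↥Ub => g.symm (u z)) z)),
      fun z => f'.toEquiv.left_inv z, fun z => f'.toEquiv.right_inv z⟩,
      fun {n} fn => isEmptyElim fn, fun {n} r v => f'.map_rel' (Sum.inl r) v⟩, ?_⟩
  intro z
  have hz : g.symm (u (Copy.to _ (f' (Copy.of (fun z : ↥Ub => u z) z)))) = u z :=
    (f'.map_rel' (n := 1) (Sum.inr ((u z : T) : cRel T 1))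
      (fun _ => Copy.of (fun z : ↥Ub => u z) z)).2 rfl
  have h3 := congrArg (⇑g) hz
  rw [g.apply_symm_apply] at h3
  exact h3

end MainHelpers

section Transfer

variable [L.IsRelational]
variable {M N : Type} [L.Structure M] [L.Structure N] {n : ℕ}

lemma mem_rangeClosure (x : Fin n → M) (i : Fin n) :
    x i ∈ Substructure.closure L (Set.range x) :=
  Substructure.subset_closure (Set.mem_range_self i)

/-- choose an index for an element of the substructure generated by a tuple. -/
noncomputable def pick (y : Fin n → M) (z : ↥(Substructure.closure L (Set.range y))) : Fin n :=
  ((Substructure.mem_closure_iff_of_isRelational L _ _).1 z.2).choose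

lemma y_pick (y : Fin n → M) (z : ↥(Substructure.closure L (Set.range y))) :
    y (pick y z) = z.1 :=
  ((Substructure.mem_closure_iff_of_isRelational L _ _).1 z.2).choose_spec

variable (x y : Fin n → M) (r : Fin n → N)
  (kx : ↥(Substructure.closure L (Set.range x)) ↪[L] N)
  (ky : ↥(Substructure.closure L (Set.range y)) ↪[L] N)

/-- transfer equalities among coordinates along two embeddings to a common tuple. -/
lemma eq_transfer (hkx : ∀ i, kx ⟨x i, mem_rangeClosure x i⟩ = r i)
    (hky : ∀ i, ky ⟨y i, mem_rangeClosure y i⟩ = r i)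
    {i j : Fin n} (h : x i = x j) : y i = y j := by
  have h1 : kx ⟨x i, mem_rangeClosure x i⟩ = kx ⟨x j, mem_rangeClosure x j⟩ :=
    congrArg kx (Subtype.ext h)
  rw [hkx i, hkx j] at h1
  have h2 : ky ⟨y i, mem_rangeClosure y i⟩ = ky ⟨y j, mem_rangeClosure y j⟩ := by
    rw [hky i, hky j]; exact h1
  exact congrArg Subtype.val (ky.injective h2)

/-- the transfer embedding sending the substructure generated by `y` to the one
generated by `x`, matching coordinates. -/
noncomputable def transEmb (hkx : ∀ i, kx ⟨x i, mem_rangeClosure x i⟩ = r i)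
    (hky : ∀ i, ky ⟨y i, mem_rangeClosure y i⟩ = r i) :
    ↥(Substructure.closure L (Set.range y)) ↪[L] M where
  toFun z := x (pick y z)
  inj' z z' h := by
    have h2 : y (pick y z) = y (pick y z') := eq_transfer x y r kx ky hkx hky h
    rw [y_pick y z, y_pick y z'] at h2
    exact Subtype.ext h2
  map_fun' {m} f := isEmptyElim f
  map_rel' {m} rr v := by
    have t1 := kx.map_rel' rr (fun i => ⟨x (pick y (v i)), mem_rangeClosure x _⟩)
    have t2 := ky.map_rel' rr (fun i => ⟨y (pick y (v i)), mem_rangeClosure y _⟩)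
    have key : @Structure.RelMap L N _ m rr
        (⇑kx ∘ (fun i => ⟨x (pick y (v i)), mem_rangeClosure x _⟩))
        = @Structure.RelMap L N _ m rr
        (⇑ky ∘ (fun i => ⟨y (pick y (v i)), mem_rangeClosure y _⟩)) :=
      congrArg _ (funext fun i => by
        show kx _ = ky _
        rw [hkx, hky])
    have e3 : (fun i => y (pick y (v i))) = (fun i => (v i).1) :=
      funext fun i => y_pick y (v i)
    exact t1.symm.trans ((iff_of_eq key).trans (t2.trans
      (iff_of_eq (congrArg (@Structure.RelMap L M _ m rr) e3))))

lemma transEmb_apply (hkx : ∀ i, kx ⟨x i, mem_rangeClosure x i⟩ = r i)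
    (hky : ∀ i, ky ⟨y i, mem_rangeClosure y i⟩ = r i) (i : Fin n) :
    transEmb x y r kx ky hkx hky ⟨y i, mem_rangeClosure y i⟩ = x i := by
  have hp : y (pick (L := L) y ⟨y i, mem_rangeClosure (L := L) y i⟩) = y i :=
    y_pick (L := L) y ⟨y i, mem_rangeClosure (L := L) y i⟩
  exact eq_transfer (L := L) y x r ky kx hky hkx hp

end Transfer

section OrbitCore

variable [L.IsRelational] {T : Type} [L.Structure T]
variable {C : Set (Bundled.{0} L.Structure)} {Ub : Bundled.{0} L.Structure} {u : Ub →[L] T}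

lemma orbit_core (hUb : InBar C Ub) (huniv : ColUniversal C Ub u) (hhom : ColHomogeneous C Ub u)
    {n : ℕ} {F : Bundled.{0} L.Structure} (x y : Fin n → (↥Ub)) (r : Fin n → (↥F))
    (kx : ↥(Substructure.closure L (Set.range x)) ↪[L] ↥F)
    (ky : ↥(Substructure.closure L (Set.range y)) ↪[L] ↥F)
    (hkx : ∀ i, kx ⟨x i, mem_rangeClosure x i⟩ = r i)
    (hky : ∀ i, ky ⟨y i, mem_rangeClosure y i⟩ = r i)
    (g : T ≃[L] T) (hg : ∀ i, g (u (y i)) = u (x i)) :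
    ∃ (f : Ub ≃[L] Ub) (g' : T ≃[L] T), (∀ z, u (f z) = g' (u z)) ∧ ∀ i, f (y i) = x i := by
  obtain ⟨fg, hfg⟩ := lift_aut hUb huniv hhom g
  have hfin : ((Substructure.closure L (Set.range y) : L.Substructure Ub) : Set (↥Ub)).Finite := by
    rw [Substructure.closure_eq_of_isRelational]
    exact Set.finite_range y
  have hsymm : ∀ w : ↥Ub, u (fg.symm w) = g.symm (u w) := by
    intro w
    have h1 := hfg (fg.symm w)
    rw [fg.apply_symm_apply] at h1
    have h2 := congrArg g.symm h1
    rw [g.symm_apply_apply] at h2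
    exact h2.symm
  have hcol₂ : ∀ z : ↥(Substructure.closure L (Set.range y)),
      u ((fg.symm.toEmbedding.comp (transEmb x y r kx ky hkx hky)) z)
        = (u.comp (Substructure.closure L (Set.range y)).subtype.toHom) z := by
    intro z
    show u (fg.symm (x (pick (L := L) y z))) = u z.1
    rw [hsymm]
    have h1 := congrArg g.symm (hg (pick (L := L) y z))
    rw [g.symm_apply_apply] at h1
    rw [← h1, y_pick (L := L) y z]
  obtain ⟨h, hch, hcm⟩ := hhom (Bundled.of (↥(Substructure.closure L (Set.range y))))
    (u.comp (Substructure.closure L (Set.range y)).subtype.toHom)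
    (inBar_sub hUb _) (finite_sub hfin)
    (Substructure.closure L (Set.range y)).subtype
    (fg.symm.toEmbedding.comp (transEmb x y r kx ky hkx hky))
    (fun z => rfl) hcol₂
  refine ⟨fg.comp h, g, ?_, ?_⟩
  · intro z
    rw [FirstOrder.Language.Equiv.comp_apply, hfg, hch]
  · intro i
    have h1 : h (y i) = fg.symm (transEmb x y r kx ky hkx hky ⟨y i, mem_rangeClosure y i⟩) :=
      hcm ⟨y i, mem_rangeClosure y i⟩
    rw [FirstOrder.Language.Equiv.comp_apply, h1, transEmb_apply, fg.apply_symm_apply]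

end OrbitCore

end Aux

/-- If the Fraïssé limit of `𝒞` is finite or has an oligomorphic
automorphism group and `Aut(T)` is oligomorphic, then the color automorphism group of a
universal homogeneous `T`-colored structure `(U,u)` in `𝒞̄` is oligomorphic. -/
theorem cAut_oligomorphic (L : FirstOrder.Language.{u, v}) [L.IsRelational]
    (U C : Set (Bundled.{0} L.Structure))
    (hU : IsStrictFraisse U) (hC : IsFraisseClass C) (hfree : IsFreeIn C U)
    (T : Type) [L.Structure T] [Countable T] (hT : AgeIn U T)
    (Ub : Bundled.{0} L.Structure) (u : Ub →[L] T) (hUb : InBar C Ub)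
    (huniv : ColUniversal C Ub u) (hhom : ColHomogeneous C Ub u)
    (hlim : ∃ F : Bundled.{0} L.Structure, IsFraisseLimitOf C F ∧
      (Finite F ∨ AutOligomorphic L F))
    (hTo : AutOligomorphic L T) :
    ∀ n : ℕ, ∃ S : Set (Fin n → Ub), S.Finite ∧
      ∀ x : Fin n → Ub, ∃ y ∈ S, ∃ (f : Ub ≃[L] Ub) (g : T ≃[L] T),
        (∀ z, u (f z) = g (u z)) ∧ ⇑f ∘ y = x := by
  classical
  intro n
  obtain ⟨F, hF, hFo⟩ := hlim
  have hRF : ∃ RF : Set (Fin n → ↥F), RF.Finite ∧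
      ∀ t : Fin n → ↥F, ∃ r ∈ RF, ∃ gF : F ≃[L] F, ∀ i, gF (r i) = t i := by
    rcases hFo with hfin | holig
    · haveI : Finite (↥F) := hfin
      exact ⟨Set.univ, Set.finite_univ,
        fun t => ⟨t, Set.mem_univ t, FirstOrder.Language.Equiv.refl L (↥F), fun i => rfl⟩⟩
    · obtain ⟨S, hSfin, hS⟩ := holig n
      refine ⟨S, hSfin, fun t => ?_⟩
      obtain ⟨r, hr, g, hgr⟩ := hS t
      exact ⟨r, hr, g, fun i => congrFun hgr i⟩
  obtain ⟨RF, hRFfin, hRF⟩ := hRF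
  obtain ⟨RT, hRTfin, hRT⟩ := hTo n
  set P : (Fin n → ↥F) → (Fin n → T) → (Fin n → ↥Ub) → Prop := fun r c x =>
    (∃ k : ↥(Substructure.closure L (Set.range x)) ↪[L] ↥F,
      ∀ i, k ⟨x i, mem_rangeClosure x i⟩ = r i) ∧
    (∃ gT : T ≃[L] T, ∀ i, gT (c i) = u (x i)) with hPdef
  refine ⟨⋃ r ∈ RF, ⋃ c ∈ RT, (if h : ∃ x, P r c x then {h.choose} else ∅), ?_, ?_⟩
  · refine hRFfin.biUnion (fun r _ => hRTfin.biUnion (fun c _ => ?_))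
    split
    · exact Set.finite_singleton _
    · exact Set.finite_empty
  · intro x
    have hxfin : ((Substructure.closure L (Set.range x) : L.Substructure Ub) : Set (↥Ub)).Finite := by
      rw [Substructure.closure_eq_of_isRelational]
      exact Set.finite_range x
    haveI hfx := finite_sub hxfin
    have hmemC : Bundled.of (c := L.Structure) (↥(Substructure.closure L (Set.range x))) ∈ C :=
      hUb.2 (Bundled.of (c := L.Structure) (↥(Substructure.closure L (Set.range x)))) hfx ⟨(Substructure.closure L (Set.range x)).subtype⟩
    obtain ⟨e⟩ := (hF.2.1 (Bundled.of (c := L.Structure) (↥(Substructure.closure L (Set.range x)))) hfx).1 hmemC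
    obtain ⟨r, hrRF, gF, hgF⟩ := hRF (fun i => e ⟨x i, mem_rangeClosure x i⟩)
    have hkx : ∀ i, (gF.symm.toEmbedding.comp e) ⟨x i, mem_rangeClosure x i⟩ = r i := by
      intro i
      show gF.symm (e ⟨x i, mem_rangeClosure x i⟩) = r i
      rw [← hgF i, gF.symm_apply_apply]
    obtain ⟨c, hcRT, gT, hgT⟩ := hRT (fun i => u (x i))
    have hgT' : ∀ i, gT (c i) = u (x i) := fun i => congrFun hgT i
    have hex : ∃ x', P r c x' := ⟨x, ⟨gF.symm.toEmbedding.comp e, hkx⟩, ⟨gT, hgT'⟩⟩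
    refine ⟨hex.choose, ?_, ?_⟩
    · refine Set.mem_biUnion hrRF (Set.mem_biUnion hcRT ?_)
      rw [dif_pos hex]
      exact rfl
    · obtain ⟨⟨ky, hky⟩, ⟨gTy, hgTy⟩⟩ := hex.choose_spec
      have hgq : ∀ i, (gT.comp gTy.symm) (u (hex.choose i)) = u (x i) := by
        intro i
        rw [FirstOrder.Language.Equiv.comp_apply, ← hgTy i, gTy.symm_apply_apply]
        exact hgT' i
      obtain ⟨f, g', hcol, hpt⟩ := orbit_core hUb huniv hhom x hex.choose r
        (gF.symm.toEmbedding.comp e) ky hkx hky (gT.comp gTy.symm) hgq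
      exact ⟨f, g', hcol, funext fun i => hpt i⟩

end Stmt10
end

section
/- Suppose Age(T) ⊆ 𝒞, and let (U,u) be a universal homogeneous T-colored structure in 𝒞̄. Then for every automorphism f of the structure U the following are equivalent: (i) there exists an automorphism g of T with u ∘ f = g ∘ u (i.e. f is a color automorphism of (U,u)); (ii) f preserves the kernel of u in both directions, i.e. for all x, y ∈ U, u(x) = u(y) if and only if u(f(x)) = u(f(y)). -/
open FirstOrder Language CategoryTheory

universe u v

namespace Stmt12

variable {L : FirstOrder.Language.{u, v}}

/-- The age of `M` is contained in the class `C` of finite structures. -/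
def AgeIn (C : Set (Bundled.{0} L.Structure)) (M : Type*) [L.Structure M] : Prop :=
  ∀ A : Bundled.{0} L.Structure, Finite A → Nonempty (A ↪[L] M) → A ∈ C

/-- `A` is a countable structure whose age is contained in `C`, i.e. `A ∈ C̄`. -/
def InBar (C : Set (Bundled.{0} L.Structure)) (A : Bundled.{0} L.Structure) : Prop :=
  Countable A ∧ AgeIn C A

/-- A Fraïssé class of finite structures: nonempty, isomorphism-closed, countably many
isomorphism types, hereditary, with the joint embedding and amalgamation properties. -/
structure IsFraisseClass (C : Set (Bundled.{0} L.Structure)) : Prop where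
  nonempty : C.Nonempty
  finite : ∀ A ∈ C, Finite A
  isoInvariant : ∀ A B : Bundled.{0} L.Structure, Nonempty (A ≃[L] B) → (A ∈ C ↔ B ∈ C)
  countableTypes : ∃ S : Set (Bundled.{0} L.Structure), S.Countable ∧
    ∀ A ∈ C, ∃ B ∈ S, Nonempty (A ≃[L] B)
  hereditary : ∀ A ∈ C, ∀ B : Bundled.{0} L.Structure, Finite B → Nonempty (B ↪[L] A) → B ∈ C
  jep : ∀ A ∈ C, ∀ B ∈ C, ∃ D ∈ C, Nonempty (A ↪[L] D) ∧ Nonempty (B ↪[L] D)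
  amalgamation : ∀ A B₁ B₂ : Bundled.{0} L.Structure, A ∈ C → B₁ ∈ C → B₂ ∈ C →
    ∀ (f₁ : A ↪[L] B₁) (f₂ : A ↪[L] B₂),
      ∃ (D : Bundled.{0} L.Structure) (_ : D ∈ C) (g₁ : B₁ ↪[L] D) (g₂ : B₂ ↪[L] D),
        ∀ x, g₁ (f₁ x) = g₂ (f₂ x)

/-- `(P, g₁, g₂)` is a pushout of the pair of embeddings `(f₁, f₂)` in the category
`(K̄, →)` of countable structures with age contained in `K`, with homomorphisms. -/
def IsPushoutIn (K : Set (Bundled.{0} L.Structure)) {A B₁ B₂ : Bundled.{0} L.Structure}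
    (f₁ : A ↪[L] B₁) (f₂ : A ↪[L] B₂) (P : Bundled.{0} L.Structure)
    (g₁ : B₁ →[L] P) (g₂ : B₂ →[L] P) : Prop :=
  InBar K P ∧ (∀ x, g₁ (f₁ x) = g₂ (f₂ x)) ∧
  ∀ D : Bundled.{0} L.Structure, InBar K D →
    ∀ (h₁ : B₁ →[L] D) (h₂ : B₂ →[L] D), (∀ x, h₁ (f₁ x) = h₂ (f₂ x)) →
      ∃! h : P →[L] D, h.comp g₁ = h₁ ∧ h.comp g₂ = h₂

/-- `(P, g₁, g₂)` is a coproduct of `B₁, B₂` in the category `(K̄, →)`. -/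
def IsCoproductIn (K : Set (Bundled.{0} L.Structure)) (B₁ B₂ P : Bundled.{0} L.Structure)
    (g₁ : B₁ →[L] P) (g₂ : B₂ →[L] P) : Prop :=
  InBar K P ∧
  ∀ D : Bundled.{0} L.Structure, InBar K D → ∀ (h₁ : B₁ →[L] D) (h₂ : B₂ →[L] D),
    ∃! h : P →[L] D, h.comp g₁ = h₁ ∧ h.comp g₂ = h₂

/-- A strict Fraïssé class: a Fraïssé class in which every pair of embeddings with common
domain has a pushout in `(K̄,→)`, and every pair of members has a coproduct in `(K̄,→)`. -/
def IsStrictFraisse (K : Set (Bundled.{0} L.Structure)) : Prop :=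
  IsFraisseClass K ∧
  (∀ A B₁ B₂ : Bundled.{0} L.Structure, A ∈ K → B₁ ∈ K → B₂ ∈ K →
    ∀ (f₁ : A ↪[L] B₁) (f₂ : A ↪[L] B₂),
      ∃ (P : Bundled.{0} L.Structure) (g₁ : B₁ →[L] P) (g₂ : B₂ →[L] P),
        IsPushoutIn K f₁ f₂ P g₁ g₂) ∧
  (∀ B₁ B₂ : Bundled.{0} L.Structure, B₁ ∈ K → B₂ ∈ K →
    ∃ (P : Bundled.{0} L.Structure) (g₁ : B₁ →[L] P) (g₂ : B₂ →[L] P),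
      IsCoproductIn K B₁ B₂ P g₁ g₂)

/-- `C` is free in the strict Fraïssé class `K`: `C ⊆ K` and `C` is closed under the
canonical (pushout) amalgams and under finite coproducts taken in `(K̄,→)`. -/
def IsFreeIn (C K : Set (Bundled.{0} L.Structure)) : Prop :=
  C ⊆ K ∧
  (∀ A B₁ B₂ : Bundled.{0} L.Structure, A ∈ C → B₁ ∈ C → B₂ ∈ C →
    ∀ (f₁ : A ↪[L] B₁) (f₂ : A ↪[L] B₂) (P : Bundled.{0} L.Structure)
      (g₁ : B₁ →[L] P) (g₂ : B₂ →[L] P), IsPushoutIn K f₁ f₂ P g₁ g₂ → P ∈ C) ∧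
  (∀ B₁ B₂ : Bundled.{0} L.Structure, B₁ ∈ C → B₂ ∈ C →
    ∀ (P : Bundled.{0} L.Structure) (g₁ : B₁ →[L] P) (g₂ : B₂ →[L] P),
      IsCoproductIn K B₁ B₂ P g₁ g₂ → P ∈ C)

/-- `(U,u)` is a universal `T`-colored structure in `C̄`: every countable `T`-colored
structure `(A,a)` in `C̄` admits an embedding `ι : A ↪ U` with `u ∘ ι = a`. -/
def ColUniversal (C : Set (Bundled.{0} L.Structure)) {T : Type*} [L.Structure T]
    (Ub : Bundled.{0} L.Structure) (u : Ub →[L] T) : Prop :=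
  ∀ (A : Bundled.{0} L.Structure) (a : A →[L] T), InBar C A →
    ∃ ι : A ↪[L] Ub, ∀ x, u (ι x) = a x

/-- `(U,u)` is a homogeneous `T`-colored structure in `C̄`: any two embeddings of a finite
`T`-colored structure `(A,a)` of `C̄` into `(U,u)` differ by an automorphism of `(U,u)`. -/
def ColHomogeneous (C : Set (Bundled.{0} L.Structure)) {T : Type*} [L.Structure T]
    (Ub : Bundled.{0} L.Structure) (u : Ub →[L] T) : Prop :=
  ∀ (A : Bundled.{0} L.Structure) (a : A →[L] T), InBar C A → Finite A →
    ∀ ι₁ ι₂ : A ↪[L] Ub, (∀ x, u (ι₁ x) = a x) → (∀ x, u (ι₂ x) = a x) →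
      ∃ f : Ub ≃[L] Ub, (∀ y, u (f y) = u y) ∧ ∀ x, f (ι₁ x) = ι₂ x

/-- If `Age(T) ⊆ 𝒞` and `(U,u)` is a universal homogeneous `T`-colored
structure in `𝒞̄`, then an automorphism `f` of `U` is a color automorphism of `(U,u)` if
and only if it preserves the kernel of `u` in both directions. -/
theorem colorAut_iff_kernel_preserving (L : FirstOrder.Language.{u, v}) [L.IsRelational]
    (U C : Set (Bundled.{0} L.Structure))
    (hU : IsStrictFraisse U) (hC : IsFraisseClass C) (hfree : IsFreeIn C U)
    (T : Type) [L.Structure T] [Countable T] (hT : AgeIn U T) (hTC : AgeIn C T)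
    (Ub : Bundled.{0} L.Structure) (u : Ub →[L] T) (hUb : InBar C Ub)
    (huniv : ColUniversal C Ub u) (hhom : ColHomogeneous C Ub u) :
    ∀ f : Ub ≃[L] Ub,
      (∃ g : T ≃[L] T, ∀ x, u (f x) = g (u x)) ↔
      (∀ x y : Ub, u x = u y ↔ u (f x) = u (f y)) := by
  intro f
  constructor
  · rintro ⟨g, hg⟩ x y
    constructor
    · intro h; rw [hg, hg, h]
    · intro h; rw [hg, hg] at h; exact g.injective h
  · intro hker
    obtain ⟨ι, hι⟩ := huniv (Bundled.of T) (FirstOrder.Language.Hom.id L T)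
      ⟨‹Countable T›, hTC⟩
    have hι' : ∀ t : T, u (ι t) = t := hι
    set g : T → T := fun t => u (f (ι t)) with hgdef
    set g' : T → T := fun t => u (f.symm (ι t)) with hg'def
    have keyf : ∀ x y : Ub, u x = u y → u (f x) = u (f y) := fun x y h => (hker x y).1 h
    have keyfs : ∀ x y : Ub, u x = u y → u (f.symm x) = u (f.symm y) := by
      intro x y h
      refine (hker (f.symm x) (f.symm y)).2 ?_
      simpa using h
    have key : ∀ x : Ub, g (u x) = u (f x) := fun x => keyf _ _ (hι' _)
    have key' : ∀ x : Ub, g' (u x) = u (f.symm x) := fun x => keyfs _ _ (hι' _)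
    have hgg' : ∀ t, g (g' t) = t := by
      intro t
      have h1 := key (f.symm (ι t))
      simp only [FirstOrder.Language.Equiv.apply_symm_apply] at h1
      rw [hg'def]
      simp only [hgdef] at h1 ⊢
      rw [h1, hι']
    have hg'g : ∀ t, g' (g t) = t := by
      intro t
      have h1 := key' (f (ι t))
      simp only [FirstOrder.Language.Equiv.symm_apply_apply] at h1
      rw [hgdef]
      simp only [hg'def] at h1 ⊢
      rw [h1, hι']
    have hhom : ∀ (f' : Ub ≃[L] Ub) ⦃n⦄ (r : L.Relations n) (x : Fin n → T),
        Structure.RelMap r x → Structure.RelMap r (fun i => u (f' (ι (x i)))) := by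
      intro f' n r x hx
      have h1 : Structure.RelMap r (fun i => ι (x i)) := by
        have := ι.map_rel' r x
        exact this.2 hx
      have h2 : Structure.RelMap r (fun i => f' (ι (x i))) := by
        have := f'.map_rel' r (fun i => ι (x i))
        exact this.2 h1
      exact u.map_rel' r _ h2
    refine ⟨⟨⟨g, g', hg'g, hgg'⟩, ?_, ?_⟩, fun x => (key x).symm⟩
    · intro n fn x
      exact isEmptyElim fn
    · intro n r x
      constructor
      · intro h
        have := hhom f.symm r (fun i => g (x i)) h
        have heq : (fun i => u (f.symm (ι (g (x i))))) = x := by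
          funext i
          have : u (f.symm (ι (g (x i)))) = g' (g (x i)) := rfl
          rw [this, hg'g]
        rwa [heq] at this
      · intro h
        exact hhom f r x h


end Stmt12
end

section
/- Let λ be a regular cardinal and let 𝔄, 𝔅, ℭ be categories such that 𝔄 and 𝔅 have colimits of all λ-chains and all morphisms of 𝔅 are monomorphisms. Let F : 𝔄 → ℭ be λ-continuous and let G : 𝔅 → ℭ preserve monomorphisms. If (A,f,B) is an object of the comma category (F↓G) such that A is λ-small in 𝔄 and B is λ-small in 𝔅, then (A,f,B) is λ-small in (F↓G). -/
open CategoryTheory CategoryTheory.Limits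

universe w u₁ v₁ u₂ v₂ u₃ v₃

namespace Stmt16

/-- An object `X` of a category `K` is `λ`-small if every morphism from `X` into the
colimit of a `λ`-chain factors through some object of the chain. -/
def IsLambdaSmall (c : Cardinal.{w}) {K : Type*} [Category K] (X : K) : Prop :=
  ∀ (D : c.ord.ToType ⥤ K) (co : Cocone D), IsColimit co →
    ∀ h : X ⟶ co.pt, ∃ (j : c.ord.ToType) (g : X ⟶ D.obj j), g ≫ co.ι.app j = h

/-- A functor is `λ`-continuous if it preserves colimits of `λ`-chains. -/
def LambdaContinuous (c : Cardinal.{w}) {A : Type*} [Category A] {C : Type*} [Category C]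
    (F : A ⥤ C) : Prop :=
  ∀ (D : c.ord.ToType ⥤ A) (co : Cocone D), IsColimit co →
    Nonempty (IsColimit (F.mapCocone co))

/-- Let `λ` be a regular cardinal, suppose `𝔄` and `𝔅` have colimits of
`λ`-chains, all morphisms of `𝔅` are monomorphisms, `F : 𝔄 ⥤ ℭ` is `λ`-continuous and
`G : 𝔅 ⥤ ℭ` preserves monomorphisms. If `X = (A,f,B)` is an object of `(F↓G)` with `A`
`λ`-small in `𝔄` and `B` `λ`-small in `𝔅`, then `X` is `λ`-small in `(F↓G)`. -/
theorem comma_lambdaSmall (c : Cardinal.{w}) (hreg : c.IsRegular)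
    {A : Type u₁} [Category.{v₁} A] {B : Type u₂} [Category.{v₂} B]
    {C : Type u₃} [Category.{v₃} C]
    [HasColimitsOfShape c.ord.ToType A] [HasColimitsOfShape c.ord.ToType B]
    (hmonoB : ∀ {X Y : B} (f : X ⟶ Y), Mono f)
    (F : A ⥤ C) (G : B ⥤ C)
    (hF : LambdaContinuous c F)
    (hG : ∀ {X Y : B} (f : X ⟶ Y), Mono f → Mono (G.map f))
    (X : Comma F G)
    (hleft : IsLambdaSmall c X.left) (hright : IsLambdaSmall c X.right) :
    IsLambdaSmall c X := by
  intro D co hco h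
  -- colimit cocones for the component diagrams
  let t₁ := colimit.isColimit (D ⋙ Comma.fst F G)
  let t₂ := colimit.isColimit (D ⋙ Comma.snd F G)
  haveI : PreservesColimit (D ⋙ Comma.fst F G) F :=
    preservesColimit_of_preserves_colimit_cocone t₁ ((hF _ _ t₁).some)
  -- the componentwise colimit cocone in the comma category
  let cc := Comma.coconeOfPreserves D t₁ (colimit.cocone (D ⋙ Comma.snd F G))
  have hcc : IsColimit cc := Comma.coconeOfPreservesIsColimit D t₁ t₂
  have e : cc ≅ co := hcc.uniqueUpToIso hco
  -- the component cocones of `co` are colimits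
  have hA : IsColimit ((Comma.fst F G).mapCocone co) :=
    (IsColimit.ofIsoColimit t₁ (Cocones.ext (Iso.refl _) (by intro j; simp [cc]))).ofIsoColimit
      ((Cocones.functoriality D (Comma.fst F G)).mapIso e)
  have hB : IsColimit ((Comma.snd F G).mapCocone co) :=
    (IsColimit.ofIsoColimit t₂ (Cocones.ext (Iso.refl _) (by intro j; simp [cc]))).ofIsoColimit
      ((Cocones.functoriality D (Comma.snd F G)).mapIso e)
  -- factor the two components
  obtain ⟨j₁, gA, hgA⟩ := hleft (D ⋙ Comma.fst F G) _ hA h.left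
  obtain ⟨j₂, gB, hgB⟩ := hright (D ⋙ Comma.snd F G) _ hB h.right
  refine ⟨max j₁ j₂,
    { left := gA ≫ (D.map (homOfLE (le_max_left j₁ j₂))).left
      right := gB ≫ (D.map (homOfLE (le_max_right j₁ j₂))).right
      w := ?_ }, ?_⟩
  · -- compatibility, using that `G` maps everything in `B` to monos
    haveI : Mono (G.map ((co.ι.app (max j₁ j₂)).right)) := hG _ (hmonoB _)
    rw [← cancel_mono (G.map ((co.ι.app (max j₁ j₂)).right)), Category.assoc]
    have w₁ := (co.ι.app (max j₁ j₂)).w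
    have hl : (gA ≫ (D.map (homOfLE (le_max_left j₁ j₂))).left) ≫
        (co.ι.app (max j₁ j₂)).left = h.left := by
      rw [Category.assoc, ← Comma.comp_left, co.w (homOfLE (le_max_left j₁ j₂))]
      exact hgA
    have hr : (gB ≫ (D.map (homOfLE (le_max_right j₁ j₂))).right) ≫
        (co.ι.app (max j₁ j₂)).right = h.right := by
      rw [Category.assoc, ← Comma.comp_right, co.w (homOfLE (le_max_right j₁ j₂))]
      exact hgB
    simp only [Functor.const_obj_obj] at w₁
    rw [Category.assoc, ← w₁, ← F.map_comp_assoc, hl, h.w, ← G.map_comp, hr]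
  · apply CommaMorphism.ext
    · show (_ ≫ _) ≫ (co.ι.app (max j₁ j₂)).left = h.left
      rw [Category.assoc, ← Comma.comp_left, co.w (homOfLE (le_max_left j₁ j₂))]
      exact hgA
    · show (_ ≫ _) ≫ (co.ι.app (max j₁ j₂)).right = h.right
      rw [Category.assoc, ← Comma.comp_right, co.w (homOfLE (le_max_right j₁ j₂))]
      exact hgB

end Stmt16
end

section
/- Let G be an arbitrary subgroup of Aut(T) and let (U,u) be a G-universal, G-homogeneous T-colored structure in 𝒞̄. Then (U,u) is a universal, homogeneous T-colored structure in 𝒞̄: every countable T-colored structure in 𝒞̄ admits an embedding into (U,u), and for every finite T-colored structure (A,a) in 𝒞̄ and all embeddings ι₁, ι₂ : (A,a) ↪ (U,u) there is an automorphism f of (U,u) with f ∘ ι₁ = ι₂. -/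
open FirstOrder Language CategoryTheory

universe u v

namespace Stmt19

variable {L : FirstOrder.Language.{u, v}}

/-- The age of `M` is contained in the class `C` of finite structures. -/
def AgeIn (C : Set (Bundled.{0} L.Structure)) (M : Type*) [L.Structure M] : Prop :=
  ∀ A : Bundled.{0} L.Structure, Finite A → Nonempty (A ↪[L] M) → A ∈ C

/-- `A` is a countable structure whose age is contained in `C`, i.e. `A ∈ C̄`. -/
def InBar (C : Set (Bundled.{0} L.Structure)) (A : Bundled.{0} L.Structure) : Prop :=
  Countable A ∧ AgeIn C A

/-- A Fraïssé class of finite structures: nonempty, isomorphism-closed, countably many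
isomorphism types, hereditary, with the joint embedding and amalgamation properties. -/
structure IsFraisseClass (C : Set (Bundled.{0} L.Structure)) : Prop where
  nonempty : C.Nonempty
  finite : ∀ A ∈ C, Finite A
  isoInvariant : ∀ A B : Bundled.{0} L.Structure, Nonempty (A ≃[L] B) → (A ∈ C ↔ B ∈ C)
  countableTypes : ∃ S : Set (Bundled.{0} L.Structure), S.Countable ∧
    ∀ A ∈ C, ∃ B ∈ S, Nonempty (A ≃[L] B)
  hereditary : ∀ A ∈ C, ∀ B : Bundled.{0} L.Structure, Finite B → Nonempty (B ↪[L] A) → B ∈ C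
  jep : ∀ A ∈ C, ∀ B ∈ C, ∃ D ∈ C, Nonempty (A ↪[L] D) ∧ Nonempty (B ↪[L] D)
  amalgamation : ∀ A B₁ B₂ : Bundled.{0} L.Structure, A ∈ C → B₁ ∈ C → B₂ ∈ C →
    ∀ (f₁ : A ↪[L] B₁) (f₂ : A ↪[L] B₂),
      ∃ (D : Bundled.{0} L.Structure) (_ : D ∈ C) (g₁ : B₁ ↪[L] D) (g₂ : B₂ ↪[L] D),
        ∀ x, g₁ (f₁ x) = g₂ (f₂ x)

/-- `(P, g₁, g₂)` is a pushout of the pair of embeddings `(f₁, f₂)` in the category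
`(K̄, →)` of countable structures with age contained in `K`, with homomorphisms. -/
def IsPushoutIn (K : Set (Bundled.{0} L.Structure)) {A B₁ B₂ : Bundled.{0} L.Structure}
    (f₁ : A ↪[L] B₁) (f₂ : A ↪[L] B₂) (P : Bundled.{0} L.Structure)
    (g₁ : B₁ →[L] P) (g₂ : B₂ →[L] P) : Prop :=
  InBar K P ∧ (∀ x, g₁ (f₁ x) = g₂ (f₂ x)) ∧
  ∀ D : Bundled.{0} L.Structure, InBar K D →
    ∀ (h₁ : B₁ →[L] D) (h₂ : B₂ →[L] D), (∀ x, h₁ (f₁ x) = h₂ (f₂ x)) →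
      ∃! h : P →[L] D, h.comp g₁ = h₁ ∧ h.comp g₂ = h₂

/-- `(P, g₁, g₂)` is a coproduct of `B₁, B₂` in the category `(K̄, →)`. -/
def IsCoproductIn (K : Set (Bundled.{0} L.Structure)) (B₁ B₂ P : Bundled.{0} L.Structure)
    (g₁ : B₁ →[L] P) (g₂ : B₂ →[L] P) : Prop :=
  InBar K P ∧
  ∀ D : Bundled.{0} L.Structure, InBar K D → ∀ (h₁ : B₁ →[L] D) (h₂ : B₂ →[L] D),
    ∃! h : P →[L] D, h.comp g₁ = h₁ ∧ h.comp g₂ = h₂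

/-- A strict Fraïssé class: a Fraïssé class in which every pair of embeddings with common
domain has a pushout in `(K̄,→)`, and every pair of members has a coproduct in `(K̄,→)`. -/
def IsStrictFraisse (K : Set (Bundled.{0} L.Structure)) : Prop :=
  IsFraisseClass K ∧
  (∀ A B₁ B₂ : Bundled.{0} L.Structure, A ∈ K → B₁ ∈ K → B₂ ∈ K →
    ∀ (f₁ : A ↪[L] B₁) (f₂ : A ↪[L] B₂),
      ∃ (P : Bundled.{0} L.Structure) (g₁ : B₁ →[L] P) (g₂ : B₂ →[L] P),
        IsPushoutIn K f₁ f₂ P g₁ g₂) ∧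
  (∀ B₁ B₂ : Bundled.{0} L.Structure, B₁ ∈ K → B₂ ∈ K →
    ∃ (P : Bundled.{0} L.Structure) (g₁ : B₁ →[L] P) (g₂ : B₂ →[L] P),
      IsCoproductIn K B₁ B₂ P g₁ g₂)

/-- `C` is free in the strict Fraïssé class `K`: `C ⊆ K` and `C` is closed under the
canonical (pushout) amalgams and under finite coproducts taken in `(K̄,→)`. -/
def IsFreeIn (C K : Set (Bundled.{0} L.Structure)) : Prop :=
  C ⊆ K ∧
  (∀ A B₁ B₂ : Bundled.{0} L.Structure, A ∈ C → B₁ ∈ C → B₂ ∈ C →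
    ∀ (f₁ : A ↪[L] B₁) (f₂ : A ↪[L] B₂) (P : Bundled.{0} L.Structure)
      (g₁ : B₁ →[L] P) (g₂ : B₂ →[L] P), IsPushoutIn K f₁ f₂ P g₁ g₂ → P ∈ C) ∧
  (∀ B₁ B₂ : Bundled.{0} L.Structure, B₁ ∈ C → B₂ ∈ C →
    ∀ (P : Bundled.{0} L.Structure) (g₁ : B₁ →[L] P) (g₂ : B₂ →[L] P),
      IsCoproductIn K B₁ B₂ P g₁ g₂ → P ∈ C)

/-- `(U,u)` is a universal `T`-colored structure in `C̄`: every countable `T`-colored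
structure `(A,a)` in `C̄` admits an embedding `ι : A ↪ U` with `u ∘ ι = a`. -/
def ColUniversal (C : Set (Bundled.{0} L.Structure)) {T : Type*} [L.Structure T]
    (Ub : Bundled.{0} L.Structure) (u : Ub →[L] T) : Prop :=
  ∀ (A : Bundled.{0} L.Structure) (a : A →[L] T), InBar C A →
    ∃ ι : A ↪[L] Ub, ∀ x, u (ι x) = a x

/-- `(U,u)` is a homogeneous `T`-colored structure in `C̄`: any two embeddings of a finite
`T`-colored structure `(A,a)` of `C̄` into `(U,u)` differ by an automorphism of `(U,u)`. -/
def ColHomogeneous (C : Set (Bundled.{0} L.Structure)) {T : Type*} [L.Structure T]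
    (Ub : Bundled.{0} L.Structure) (u : Ub →[L] T) : Prop :=
  ∀ (A : Bundled.{0} L.Structure) (a : A →[L] T), InBar C A → Finite A →
    ∀ ι₁ ι₂ : A ↪[L] Ub, (∀ x, u (ι₁ x) = a x) → (∀ x, u (ι₂ x) = a x) →
      ∃ f : Ub ≃[L] Ub, (∀ y, u (f y) = u y) ∧ ∀ x, f (ι₁ x) = ι₂ x

/-- `G` is (the carrier of) a subgroup of `Aut(T)`. -/
def IsAutSubgroupSet (L : FirstOrder.Language.{u, v}) (T : Type*) [L.Structure T]
    (G : Set (T ≃[L] T)) : Prop :=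
  Language.Equiv.refl L T ∈ G ∧ (∀ f ∈ G, ∀ g ∈ G, f.comp g ∈ G) ∧ ∀ f ∈ G, f.symm ∈ G

/-- `(U,u)` is a `G`-universal `T`-colored structure in `𝒞̄`: every countable `T`-colored
structure `(A,a)` in `𝒞̄` admits a `G`-embedding `(f,g)` into `(U,u)`. -/
def GColUniversal (C : Set (Bundled.{0} L.Structure)) {T : Type*} [L.Structure T]
    (G : Set (T ≃[L] T)) (Ub : Bundled.{0} L.Structure) (u : Ub →[L] T) : Prop :=
  ∀ (A : Bundled.{0} L.Structure) (a : A →[L] T), InBar C A →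
    ∃ (f : A ↪[L] Ub) (g : T ≃[L] T), g ∈ G ∧ ∀ x, u (f x) = g (a x)

/-- `(U,u)` is a `G`-homogeneous `T`-colored structure in `𝒞̄`: any two `G`-embeddings of a
finite `T`-colored structure `(A,a)` of `𝒞̄` into `(U,u)` differ by a `G`-automorphism. -/
def GColHomogeneous (C : Set (Bundled.{0} L.Structure)) {T : Type*} [L.Structure T]
    (G : Set (T ≃[L] T)) (Ub : Bundled.{0} L.Structure) (u : Ub →[L] T) : Prop :=
  ∀ (A : Bundled.{0} L.Structure) (a : A →[L] T), InBar C A → Finite A →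
    ∀ (f₁ f₂ : A ↪[L] Ub) (g₁ g₂ : T ≃[L] T), g₁ ∈ G → g₂ ∈ G →
      (∀ x, u (f₁ x) = g₁ (a x)) → (∀ x, u (f₂ x) = g₂ (a x)) →
      ∃ (f₃ : Ub ≃[L] Ub) (g₃ : T ≃[L] T), g₃ ∈ G ∧ (∀ y, u (f₃ y) = g₃ (u y)) ∧
        (∀ x, f₃ (f₁ x) = f₂ x) ∧ ∀ t, g₃ (g₁ t) = g₂ t

/-- For an arbitrary subgroup `G` of `Aut(T)`, every `G`-universal,
`G`-homogeneous `T`-colored structure in `𝒞̄` is universal and homogeneous. -/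
theorem G_universal_homogeneous_is_universal_homogeneous (L : FirstOrder.Language.{u, v})
    [L.IsRelational] (U C : Set (Bundled.{0} L.Structure))
    (hU : IsStrictFraisse U) (hC : IsFraisseClass C) (hfree : IsFreeIn C U)
    (T : Type) [L.Structure T] [Countable T] (hT : AgeIn U T)
    (G : Set (T ≃[L] T)) (hG : IsAutSubgroupSet L T G)
    (Ub : Bundled.{0} L.Structure) (u : Ub →[L] T) (hUb : InBar C Ub)
    (huniv : GColUniversal C G Ub u) (hhom : GColHomogeneous C G Ub u) :
    ColUniversal C Ub u ∧ ColHomogeneous C Ub u := by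
  constructor
  · -- Universality
    intro A a hA
    obtain ⟨f, g, hgG, hfg⟩ := huniv A a hA
    -- the empty substructure of `Ub`, as a bundled structure
    let E : Bundled.{0} L.Structure := ⟨↥(⊥ : L.Substructure Ub), inferInstance⟩
    have hEempty : IsEmpty E := by
      show IsEmpty ↥(⊥ : L.Substructure Ub); infer_instance
    have hEfin : Finite E := @Finite.of_subsingleton _ (@IsEmpty.instSubsingleton _ hEempty)
    let incl : E ↪[L] Ub := Substructure.subtype (⊥ : L.Substructure Ub)
    have hEbar : InBar C E := by
      refine ⟨@Finite.to_countable _ hEfin, ?_⟩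
      intro B hBfin ⟨e⟩
      exact hUb.2 B hBfin ⟨incl.comp e⟩
    let e : E →[L] T := u.comp incl.toHom
    obtain ⟨f₃, g₃, hg₃G, hcol, -, htw⟩ :=
      hhom E e hEbar hEfin incl incl g (Language.Equiv.refl L T) hgG hG.1
        (fun x => (hEempty.false x).elim) (fun x => (hEempty.false x).elim)
    refine ⟨f₃.toEmbedding.comp f, fun x => ?_⟩
    have h1 : u (f₃ (f x)) = g₃ (u (f x)) := hcol (f x)
    have h2 : g₃ (g (a x)) = a x := htw (a x)
    simp only [Language.Embedding.comp_apply, Language.Equiv.coe_toEmbedding]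
    rw [h1, hfg x, h2]
  · -- Homogeneity
    intro A a hA hAfin ι₁ ι₂ h₁ h₂
    obtain ⟨f₃, g₃, hg₃G, hcol, hcomm, htw⟩ :=
      hhom A a hA hAfin ι₁ ι₂ (Language.Equiv.refl L T) (Language.Equiv.refl L T)
        hG.1 hG.1 (fun x => h₁ x) (fun x => h₂ x)
    have hg₃ : ∀ t, g₃ t = t := fun t => htw t
    exact ⟨f₃, fun y => by rw [hcol y, hg₃], hcomm⟩

end Stmt19
end
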